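/- arXiv:1602.02632 — 10 statements merged into one kernel-verified Lean document; each statement's English description precedes it below -/
import Mathlib

section
/- For every prime p > 2, the binomial coefficient C(2p-1, p-1) is congruent to 1 modulo p^2. -/
open Finset

theorem babbage (p : ℕ) (hp : p.Prime) (h : 2 < p) :
    Nat.choose (2*p - 1) (p - 1) ≡ 1 [MOD p^2] := by
  have hp0 : 0 < p := hp.pos
  have key : (2*p).choose p = 2 * Nat.choose (2*p - 1) (p - 1) := by
    have h1 := Nat.add_one_mul_choose_eq (2*p - 1) (p - 1)
    rw [(by omega : 2*p-1+1 = 2*p), (by omega : p-1+1 = p)] at h1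
    have h2 : (2 * ((2*p - 1).choose (p-1))) * p = ((2*p).choose p) * p := by
      rw [← h1]; ring
    exact (Nat.eq_of_mul_eq_mul_right hp0 h2).symm
  have hvan : (2*p).choose p = ∑ i ∈ Finset.range (p+1), p.choose i * p.choose (p - i) := by
    rw [two_mul, Nat.add_choose_eq, Finset.Nat.sum_antidiagonal_eq_sum_range_succ_mk]
  have hmod2 : (2*p).choose p ≡ 2 [MOD p^2] := by
    rw [Nat.ModEq] at *
    rw [hvan, Finset.sum_nat_mod]
    have hterm : ∀ i ∈ Finset.range (p+1),
        p.choose i * p.choose (p - i) % p^2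
          = ((if i = 0 then 1 else 0) + (if i = p then 1 else 0)) % p^2 := by
      intro i hi
      simp only [Finset.mem_range] at hi
      rcases eq_or_ne i 0 with rfl | h0
      · simp [if_neg (by omega : ¬ (0:ℕ) = p)]
      rcases eq_or_ne i p with rfl | hip
      · simp [h0]
      · have hd1 : p ∣ p.choose i := hp.dvd_choose_self h0 (by omega)
        have hd2 : p ∣ p.choose (p - i) := hp.dvd_choose_self (by omega) (by omega)
        have hdvd : p^2 ∣ p.choose i * p.choose (p - i) := by
          rw [sq]; exact mul_dvd_mul hd1 hd2
        simp [if_neg h0, if_neg hip, Nat.eq_zero_of_dvd_of_lt, Nat.mod_eq_zero_of_dvd hdvd]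
    rw [Finset.sum_congr rfl hterm, ← Finset.sum_nat_mod]
    have hval : ∑ i ∈ Finset.range (p+1),
        ((if i = 0 then (1:ℕ) else 0) + (if i = p then 1 else 0)) = 2 := by
      rw [Finset.sum_add_distrib, Finset.sum_ite_eq' _ 0 (fun _ => 1),
        Finset.sum_ite_eq' _ p (fun _ => 1)]
      simp
    rw [hval]
  rw [key, (by norm_num : (2:ℕ) = 2 * 1)] at hmod2
  have hcop : Nat.Coprime 2 (p^2) :=
    ((Nat.coprime_primes Nat.prime_two hp).mpr (by omega)).pow_right 2
  exact Nat.ModEq.cancel_left_of_coprime hcop.symm hmod2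
end

section
/- For every prime p > 3, the binomial coefficient C(2p-1, p-1) is congruent to 1 modulo p^3. -/
open Finset

-- general expansion lemma
lemma wexpand {R : Type*} [CommRing R] (q : R) (hq : q^3 = 0) (u : ℕ → R) (s : Finset ℕ) :
    ∃ c : R, (∏ k ∈ s, (1 + q * u k) = 1 + q * (∑ k ∈ s, u k) + q^2 * c ∧
      2 * (q^2 * c) = q^2 * (∑ k ∈ s, u k)^2 - q^2 * (∑ k ∈ s, (u k)^2)) := by
  induction s using Finset.induction_on with
  | empty => exact ⟨0, by simp⟩
  | @insert a s ha ih =>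
    obtain ⟨c, h1, h2⟩ := ih
    refine ⟨c + u a * (∑ k ∈ s, u k) + q * (u a * c), ?_, ?_⟩
    · rw [Finset.prod_insert ha, Finset.sum_insert ha, h1]
      ring
    · rw [Finset.sum_insert ha, Finset.sum_insert ha]
      linear_combination h2 + 2 * u a * c * hq

-- factorial identity
lemma wfact {p : ℕ} (hp : 0 < p) :
    (p-1).factorial * Nat.choose (2*p-1) (p-1) = ∏ k ∈ Finset.Ico 1 p, (p + k) := by
  have h1 := Nat.choose_mul_factorial_mul_factorial (show p-1 ≤ 2*p-1 by omega)
  have he : 2*p-1-(p-1) = p := by omega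
  rw [he] at h1
  have h2 : ∏ k ∈ Finset.Ico 1 p, (p + k) = ∏ k ∈ Finset.Ico (p+1) (2*p), k := by
    have := Finset.prod_Ico_add (fun x => x) 1 p p
    rw [this]
    have he2 : 1 + p = p + 1 := by ring
    have he3 : p + p = 2 * p := by ring
    rw [he2, he3]
  have h3 : (∏ k ∈ Finset.Ico 1 (p+1), k) * ∏ k ∈ Finset.Ico (p+1) (2*p), k
      = ∏ k ∈ Finset.Ico 1 (2*p), k :=
    Finset.prod_Ico_consecutive _ (by omega) (by omega)
  have h4 : ∏ k ∈ Finset.Ico 1 (p+1), k = p.factorial := by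
    simpa using Finset.prod_Ico_id_eq_factorial p
  have h5 : ∏ k ∈ Finset.Ico 1 (2*p), k = (2*p-1).factorial := by
    have : 2*p = (2*p-1)+1 := by omega
    rw [this]
    simpa using Finset.prod_Ico_id_eq_factorial (2*p-1)
  rw [h4, h5] at h3
  apply Nat.eq_of_mul_eq_mul_left (Nat.factorial_pos p)
  rw [h2, h3, ← h1]
  ring
open Finset

section
variable {p : ℕ} (hp : p.Prime) (h3 : 3 < p)

-- cast hom
noncomputable def wphi (p : ℕ) : ZMod (p^3) →+* ZMod p :=
  ZMod.castHom (dvd_pow_self p (by norm_num)) (ZMod p)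

include hp h3

lemma wunit {n : ℕ} (hn : ¬ p ∣ n) : IsUnit (n : ZMod (p^3)) := by
  rw [ZMod.isUnit_iff_coprime]
  exact Nat.Coprime.pow_right 3 ((Nat.coprime_comm.mp ((hp.coprime_iff_not_dvd).mpr hn)))

lemma wphi_inv {n : ℕ} (hn : ¬ p ∣ n) :
    wphi p ((n : ZMod (p^3))⁻¹) = ((n : ZMod p))⁻¹ := by
  haveI : Fact p.Prime := ⟨hp⟩
  have hu := wunit hp h3 hn
  have hne : (n : ZMod p) ≠ 0 := by
    rw [Ne, ZMod.natCast_eq_zero_iff]; exact hn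
  have hmul : wphi p ((n : ZMod (p^3))⁻¹) * (n : ZMod p) = 1 := by
    rw [show ((n : ZMod p)) = wphi p (n : ZMod (p^3)) by simp [wphi],
      ← map_mul, ZMod.inv_mul_of_unit _ hu, map_one]
  rw [show ((n:ZMod p))⁻¹ = wphi p (n : ZMod (p^3))⁻¹ from
    inv_eq_of_mul_eq_one_right (by rwa [mul_comm] at hmul)]

lemma wpdvd {x : ZMod (p^3)} (hx : wphi p x = 0) : ∃ d, x = (p : ZMod (p^3)) * d := by
  haveI : NeZero (p^3) := ⟨pow_ne_zero 3 hp.pos.ne'⟩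
  have hval : ((x.val : ℕ) : ZMod (p^3)) = x := ZMod.natCast_zmod_val x
  have : ((x.val : ℕ) : ZMod p) = 0 := by
    rw [← hval] at hx
    simpa [wphi] using hx
  rw [ZMod.natCast_eq_zero_iff] at this
  obtain ⟨m, hm⟩ := this
  exact ⟨m, by rw [← hval, hm]; push_cast; ring⟩

include hp h3 in
lemma sum_inv_sq : ∑ k ∈ Finset.Ico 1 p, ((k : ZMod p)⁻¹)^2 = 0 := by
  haveI : Fact p.Prime := ⟨hp⟩
  have hstep : ∑ k ∈ Finset.Ico 1 p, ((k : ZMod p)⁻¹)^2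
      = ∑ x ∈ (Finset.univ : Finset (ZMod p)).erase 0, (x⁻¹)^2 := by
    refine Finset.sum_nbij' (fun k => (k : ZMod p)) (fun x => x.val) ?_ ?_ ?_ ?_ ?_
    · intro k hk
      simp only [mem_Ico] at hk
      refine Finset.mem_erase.mpr ⟨?_, Finset.mem_univ _⟩
      rw [Ne, ZMod.natCast_eq_zero_iff]
      exact fun hd => absurd (Nat.le_of_dvd (by omega) hd) (by omega)
    · intro x hx
      rw [Finset.mem_erase] at hx
      rw [mem_Ico]
      have h1 : x.val ≠ 0 := fun h => hx.1 (by rwa [← ZMod.val_eq_zero])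
      have h2 := ZMod.val_lt x
      change 1 ≤ x.val ∧ x.val < p; omega
    · intro k hk
      simp only [mem_Ico] at hk
      rw [ZMod.val_natCast_of_lt hk.2]
    · intro x hx
      exact ZMod.natCast_zmod_val x
    · intro k hk; rfl
  have hinv : ∑ x ∈ (Finset.univ : Finset (ZMod p)).erase 0, (x⁻¹)^2
      = ∑ x ∈ (Finset.univ : Finset (ZMod p)).erase 0, x^2 := by
    refine Finset.sum_nbij' (fun x => x⁻¹) (fun x => x⁻¹) ?_ ?_ ?_ ?_ ?_
    · intro x hx
      rw [Finset.mem_erase] at hx ⊢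
      exact ⟨inv_ne_zero hx.1, Finset.mem_univ _⟩
    · intro x hx
      rw [Finset.mem_erase] at hx ⊢
      exact ⟨inv_ne_zero hx.1, Finset.mem_univ _⟩
    · intro x hx; simp
    · intro x hx; simp
    · intro x hx; simp
  have hsq : ∑ x ∈ (Finset.univ : Finset (ZMod p)).erase 0, x^2
      = ∑ x : ZMod p, x^2 := by
    rw [← Finset.sum_erase_add _ _ (Finset.mem_univ (0 : ZMod p))]
    simp
  rw [hstep, hinv, hsq]
  apply FiniteField.sum_pow_lt_card_sub_one
  rw [ZMod.card]
  omega


-- sum of inverse squares in ZMod (p^3) is divisible by p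
lemma wsum_sq : ∃ d, ∑ k ∈ Finset.Ico 1 p, (((k : ZMod (p^3)))⁻¹)^2
    = (p : ZMod (p^3)) * d := by
  haveI : Fact p.Prime := ⟨hp⟩
  apply wpdvd hp h3
  rw [map_sum]
  have : ∀ k ∈ Finset.Ico 1 p, wphi p ((((k : ZMod (p^3)))⁻¹)^2) = ((k : ZMod p)⁻¹)^2 := by
    intro k hk
    rw [Finset.mem_Ico] at hk
    have hnd : ¬ p ∣ k := fun hd => absurd (Nat.le_of_dvd (by omega) hd) (by omega)
    rw [map_pow, wphi_inv hp h3 hnd]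
  rw [Finset.sum_congr rfl this]
  exact sum_inv_sq hp h3

-- pairing lemma
lemma wpair {k : ℕ} (hk : k ∈ Finset.Ico 1 p) :
    ((k : ZMod (p^3)))⁻¹ + (((p - k : ℕ) : ZMod (p^3)))⁻¹
      = (p : ZMod (p^3)) * (((k * (p - k) : ℕ) : ZMod (p^3)))⁻¹ := by
  rw [Finset.mem_Ico] at hk
  have hnk : ¬ p ∣ k := fun hd => absurd (Nat.le_of_dvd (by omega) hd) (by omega)
  have hnk' : ¬ p ∣ (p - k) := fun hd => absurd (Nat.le_of_dvd (by omega) hd) (by omega)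
  have hnkk : ¬ p ∣ (k * (p - k)) := by
    intro hd
    rcases (Nat.Prime.dvd_mul hp).mp hd with h | h
    exacts [hnk h, hnk' h]
  have ha := wunit hp h3 hnk
  have hb := wunit hp h3 hnk'
  have hab := wunit hp h3 hnkk
  have hcast : ((k * (p - k) : ℕ) : ZMod (p^3))
      = (k : ZMod (p^3)) * ((p - k : ℕ) : ZMod (p^3)) := by push_cast; ring
  have habm : IsUnit ((k : ZMod (p^3)) * ((p - k : ℕ) : ZMod (p^3))) := hcast ▸ hab
  apply habm.mul_left_cancel
  rw [mul_add]
  have e1 : (k : ZMod (p^3)) * ((p - k : ℕ) : ZMod (p^3)) * ((k : ZMod (p^3)))⁻¹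
      = ((p - k : ℕ) : ZMod (p^3)) := by
    rw [mul_comm (k : ZMod (p^3)), mul_assoc, ZMod.mul_inv_of_unit _ ha, mul_one]
  have e2 : (k : ZMod (p^3)) * ((p - k : ℕ) : ZMod (p^3)) * (((p - k : ℕ) : ZMod (p^3)))⁻¹
      = (k : ZMod (p^3)) := by
    rw [mul_assoc, ZMod.mul_inv_of_unit _ hb, mul_one]
  have e3 : ((k*(p-k):ℕ) : ZMod (p^3)) * ((p:ZMod (p^3)) * (((k*(p-k):ℕ) : ZMod (p^3)))⁻¹)
      = (p:ZMod (p^3)) * ((((k*(p-k):ℕ) : ZMod (p^3)))⁻¹ * ((k*(p-k):ℕ) : ZMod (p^3))) := by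
    ring
  rw [e1, e2, ← hcast, e3, ZMod.inv_mul_of_unit _ hab, mul_one]
  have : (((p - k : ℕ) : ZMod (p^3))) + (k : ZMod (p^3)) = ((p - k + k : ℕ) : ZMod (p^3)) := by
    push_cast; ring
  rw [this, show p - k + k = p by omega]

-- harmonic sum: p * S1 = 0 in ZMod p^3
lemma wharmonic : (p : ZMod (p^3)) * (∑ k ∈ Finset.Ico 1 p, ((k : ZMod (p^3)))⁻¹) = 0 := by
  haveI : Fact p.Prime := ⟨hp⟩
  set S1 := ∑ k ∈ Finset.Ico 1 p, ((k : ZMod (p^3)))⁻¹ with hS1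
  -- reindex by k ↦ p - k
  have hre : S1 = ∑ k ∈ Finset.Ico 1 p, (((p - k : ℕ) : ZMod (p^3)))⁻¹ := by
    rw [hS1]
    refine Finset.sum_nbij' (fun k => p - k) (fun k => p - k) ?_ ?_ ?_ ?_ ?_
    · intro k hk; simp only [Finset.mem_Ico] at hk ⊢; omega
    · intro k hk; simp only [Finset.mem_Ico] at hk ⊢; omega
    · intro k hk; rw [Finset.mem_Ico] at hk; change p - (p - k) = k; omega
    · intro k hk; rw [Finset.mem_Ico] at hk; change p - (p - k) = k; omega
    · intro k hk; rw [Finset.mem_Ico] at hk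
      change ((k : ZMod (p^3)))⁻¹ = (((p - (p - k) : ℕ) : ZMod (p^3)))⁻¹
      rw [show p - (p - k) = k by omega]
  have h2S1 : 2 * S1 = (p : ZMod (p^3)) *
      ∑ k ∈ Finset.Ico 1 p, (((k * (p - k) : ℕ) : ZMod (p^3)))⁻¹ := by
    rw [two_mul]
    nth_rewrite 2 [hre]
    rw [hS1, ← Finset.sum_add_distrib, Finset.mul_sum]
    exact Finset.sum_congr rfl fun k hk => wpair hp h3 hk
  -- W is divisible by p
  obtain ⟨d, hd⟩ : ∃ d, ∑ k ∈ Finset.Ico 1 p, (((k * (p - k) : ℕ) : ZMod (p^3)))⁻¹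
      = (p : ZMod (p^3)) * d := by
    apply wpdvd hp h3
    rw [map_sum]
    have hterm : ∀ k ∈ Finset.Ico 1 p,
        wphi p ((((k * (p - k) : ℕ) : ZMod (p^3)))⁻¹) = -(((k : ZMod p))⁻¹)^2 := by
      intro k hk
      rw [Finset.mem_Ico] at hk
      have hnk : ¬ p ∣ k := fun hd => absurd (Nat.le_of_dvd (by omega) hd) (by omega)
      have hnk' : ¬ p ∣ (p - k) := fun hd => absurd (Nat.le_of_dvd (by omega) hd) (by omega)
      have hnkk : ¬ p ∣ (k * (p - k)) := by
        intro hd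
        rcases (Nat.Prime.dvd_mul hp).mp hd with h | h
        exacts [hnk h, hnk' h]
      rw [wphi_inv hp h3 hnkk]
      have : ((k * (p - k) : ℕ) : ZMod p) = -((k : ZMod p))^2 := by
        have : ((p - k : ℕ) : ZMod p) = -(k : ZMod p) := by
          have : ((p - k : ℕ) : ZMod p) + (k : ZMod p) = ((p - k + k : ℕ) : ZMod p) := by
            push_cast; ring
          rw [show p - k + k = p by omega, ZMod.natCast_self] at this
          exact eq_neg_of_add_eq_zero_left this
        push_cast
        rw [this]; ring
      rw [this, inv_neg, inv_pow]
    rw [Finset.sum_congr rfl hterm, Finset.sum_neg_distrib, sum_inv_sq hp h3, neg_zero]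
  have hp3 : ((p : ZMod (p^3)))^3 = 0 := by
    rw [← Nat.cast_pow, ZMod.natCast_self]
  have h2 : 2 * ((p : ZMod (p^3)) * S1) = 0 := by
    calc 2 * ((p : ZMod (p^3)) * S1) = (p : ZMod (p^3)) * (2 * S1) := by ring
    _ = (p : ZMod (p^3)) * ((p : ZMod (p^3)) * ((p : ZMod (p^3)) * d)) := by rw [h2S1, hd]
    _ = ((p : ZMod (p^3)))^3 * d := by ring
    _ = 0 := by rw [hp3]; ring
  have h2u : IsUnit (2 : ZMod (p^3)) := by
    have : ((2 : ℕ) : ZMod (p^3)) = (2 : ZMod (p^3)) := by norm_num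
    rw [← this]
    apply wunit hp h3
    exact fun hdvd => absurd (Nat.le_of_dvd (by norm_num) hdvd) (by omega)
  exact h2u.mul_left_cancel (show (2 : ZMod (p^3)) * ((p : ZMod (p^3)) * S1) = 2 * 0 by
    rw [h2, mul_zero])
end

theorem wolstenholme (p : ℕ) (hp : p.Prime) (h : 3 < p) :
    Nat.choose (2*p - 1) (p - 1) ≡ 1 [MOD p^3] := by
  haveI : Fact p.Prime := ⟨hp⟩
  haveI : NeZero (p^3) := ⟨pow_ne_zero 3 hp.pos.ne'⟩
  have hp3 : ((p : ZMod (p^3)))^3 = 0 := by rw [← Nat.cast_pow, ZMod.natCast_self]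
  obtain ⟨c, hprod, hc2⟩ := wexpand (p : ZMod (p^3)) hp3
    (fun k => ((k : ZMod (p^3)))⁻¹) (Finset.Ico 1 p)

  have hfact : (((p-1).factorial : ℕ) : ZMod (p^3))
      = ∏ k ∈ Finset.Ico 1 p, (k : ZMod (p^3)) := by
    have he : (p-1).factorial = ∏ k ∈ Finset.Ico 1 p, k := by
      have := Finset.prod_Ico_id_eq_factorial (p-1)
      rw [show p - 1 + 1 = p by omega] at this
      simpa using this.symm
    rw [he]
    push_cast
    rfl
  have key : (∏ k ∈ Finset.Ico 1 p, (k : ZMod (p^3))) * (Nat.choose (2*p-1) (p-1) : ZMod (p^3))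
      = (∏ k ∈ Finset.Ico 1 p, (k : ZMod (p^3)))
        * ∏ k ∈ Finset.Ico 1 p, (1 + (p:ZMod (p^3)) * ((k : ZMod (p^3)))⁻¹) := by
    have h0 := wfact (show 0 < p by omega)
    have hcast : (((p-1).factorial * Nat.choose (2*p-1) (p-1) : ℕ) : ZMod (p^3))
        = ((∏ k ∈ Finset.Ico 1 p, (p + k) : ℕ) : ZMod (p^3)) := by rw [h0]
    push_cast at hcast
    rw [← hfact, hcast, hfact, ← Finset.prod_mul_distrib]
    apply Finset.prod_congr rfl
    intro k hk
    rw [Finset.mem_Ico] at hk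
    have hnk : ¬ p ∣ k := fun hd => absurd (Nat.le_of_dvd (by omega) hd) (by omega)
    have hu := wunit hp h hnk
    have he : (k : ZMod (p^3)) * (1 + (p:ZMod (p^3)) * ((k : ZMod (p^3)))⁻¹)
        = (k : ZMod (p^3)) + (p:ZMod (p^3)) * ((k : ZMod (p^3)) * ((k : ZMod (p^3)))⁻¹) := by
      ring
    rw [he, ZMod.mul_inv_of_unit _ hu, mul_one, add_comm]
  have hUprod : IsUnit (∏ k ∈ Finset.Ico 1 p, (k : ZMod (p^3))) := by
    apply Finset.prod_induction _ IsUnit (fun a b ha hb => ha.mul hb) isUnit_one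
    intro k hk
    rw [Finset.mem_Ico] at hk
    exact wunit hp h (fun hd => absurd (Nat.le_of_dvd (by omega) hd) (by omega))
  have hC : (Nat.choose (2*p-1) (p-1) : ZMod (p^3))
      = ∏ k ∈ Finset.Ico 1 p, (1 + (p:ZMod (p^3)) * ((k : ZMod (p^3)))⁻¹) :=
    hUprod.mul_left_cancel key
  have hps1 := wharmonic hp h
  obtain ⟨d, hd⟩ := wsum_sq hp h
  have hz1 : (p:ZMod (p^3))^2 * (∑ k ∈ Finset.Ico 1 p, ((k : ZMod (p^3)))⁻¹)^2 = 0 := by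
    have he : (p:ZMod (p^3))^2 * (∑ k ∈ Finset.Ico 1 p, ((k : ZMod (p^3)))⁻¹)^2
        = ((p:ZMod (p^3)) * ∑ k ∈ Finset.Ico 1 p, ((k : ZMod (p^3)))⁻¹)
          * ((p:ZMod (p^3)) * ∑ k ∈ Finset.Ico 1 p, ((k : ZMod (p^3)))⁻¹) := by ring
    rw [he, hps1, mul_zero]
  have hz2 : (p:ZMod (p^3))^2 * (∑ k ∈ Finset.Ico 1 p, (((k : ZMod (p^3)))⁻¹)^2) = 0 := by
    rw [hd, show (p:ZMod (p^3))^2 * ((p:ZMod (p^3)) * d) = (p:ZMod (p^3))^3 * d from by ring,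
      hp3, zero_mul]
  have h2u : IsUnit (2 : ZMod (p^3)) := by
    have he : ((2 : ℕ) : ZMod (p^3)) = (2 : ZMod (p^3)) := by norm_num
    rw [← he]
    apply wunit hp h
    exact fun hdvd => absurd (Nat.le_of_dvd (by norm_num) hdvd) (by omega)
  have hc0 : (p:ZMod (p^3))^2 * c = 0 := by
    apply h2u.mul_left_cancel
    rw [mul_zero, hc2, hz1, hz2, sub_zero]
  have hfin : (Nat.choose (2*p-1) (p-1) : ZMod (p^3)) = ((1:ℕ) : ZMod (p^3)) := by
    rw [hC, hprod, hps1, hc0, Nat.cast_one]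
    ring
  exact (ZMod.natCast_eq_natCast_iff _ _ _).mp hfin
end

section
/- For every prime p > 3, p^3 divides 2 - C(2p, p). -/
open Finset

lemma aux_choose_pred (p : ℕ) (hp : p.Prime) :
    ∀ j, j ≤ p - 1 → ((Nat.choose (p - 1) j : ZMod p)) = (-1) ^ j := by
  intro j
  induction j with
  | zero => simp
  | succ n ih =>
    intro hn
    have hn' : n ≤ p - 1 := Nat.le_of_lt (Nat.lt_of_lt_of_le (Nat.lt_succ_self n) hn)
    have hpascal : p.choose (n + 1) = (p - 1).choose n + (p - 1).choose (n + 1) := by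
      conv_lhs => rw [show p = (p - 1) + 1 from (Nat.succ_pred_eq_of_pos hp.pos).symm]
      exact Nat.choose_succ_succ _ _
    have hdvd : p ∣ p.choose (n + 1) :=
      hp.dvd_choose_self (Nat.succ_ne_zero n)
        (Nat.lt_of_le_of_lt hn (Nat.sub_lt hp.pos one_pos))
    have h0 : ((p.choose (n + 1) : ℕ) : ZMod p) = 0 :=
      (ZMod.natCast_eq_zero_iff _ _).mpr hdvd
    have hcast := congrArg (fun x : ℕ => (x : ZMod p)) hpascal
    simp only [Nat.cast_add] at hcast
    rw [h0, ih hn'] at hcast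
    have hfin : ((p - 1).choose (n + 1) : ZMod p) = -(-1) ^ n := by
      linear_combination -hcast
    rw [hfin]; ring

theorem stmt2 (p : ℕ) (hp : p.Prime) (h : 3 < p) :
    (p : ℤ)^3 ∣ 2 - (Nat.choose (2*p) p : ℤ) := by
  haveI : Fact p.Prime := ⟨hp⟩
  have hp0 : 0 < p := hp.pos
  -- Vandermonde: C(2p,p) = ∑_{k=0}^{p} C(p,k)^2
  have hV : (2 * p).choose p = ∑ k ∈ range (p + 1), (p.choose k) ^ 2 := by
    rw [two_mul, Nat.add_choose_eq,
      Finset.Nat.sum_antidiagonal_eq_sum_range_succ (fun i j => p.choose i * p.choose j)]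
    refine Finset.sum_congr rfl fun k hk => ?_
    rw [Nat.choose_symm (Nat.lt_succ_iff.mp (mem_range.mp hk)), sq]
  -- strip off the endpoint terms
  have hsplit : (2 * p).choose p = 2 + ∑ k ∈ Ico 1 p, (p.choose k) ^ 2 := by
    rw [hV, Finset.range_eq_Ico,
      Finset.sum_eq_sum_Ico_succ_bot (by omega : 0 < p + 1),
      Finset.sum_Ico_succ_top (by omega : 1 ≤ p)]
    simp [Nat.choose_self, Nat.choose_zero_right]
    omega
  -- each C(p,k), 1 ≤ k < p, equals p * c k
  set c : ℕ → ℕ := fun k => p.choose k / p with hc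
  have hck : ∀ k ∈ Ico 1 p, p.choose k = p * c k := by
    intro k hk
    rw [mem_Ico] at hk
    have hdvd : p ∣ p.choose k := hp.dvd_choose_self (by omega) hk.2
    exact (Nat.mul_div_cancel' hdvd).symm
  -- the key divisibility : p ∣ ∑ (c k)^2
  have hkey : (p : ℤ) ∣ ∑ k ∈ Ico 1 p, (c k : ℤ) ^ 2 := by
    have hz : ((∑ k ∈ Ico 1 p, (c k : ℤ) ^ 2 : ℤ) : ZMod p) = 0 := by
      push_cast
      have hterm : ∀ k ∈ Ico 1 p, ((c k : ZMod p)) ^ 2 = ((k : ZMod p)⁻¹) ^ 2 := by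
        intro k hk
        rw [mem_Ico] at hk
        have hkne : (k : ZMod p) ≠ 0 := by
          rw [Ne, ZMod.natCast_eq_zero_iff]
          intro hd
          have := Nat.le_of_dvd (by omega) hd
          omega
        -- k * c k = C(p-1, k-1) in ℕ
        have hnat : k * c k = (p - 1).choose (k - 1) := by
          have h1 := Nat.add_one_mul_choose_eq (p - 1) (k - 1)
          rw [show p - 1 + 1 = p by omega, show k - 1 + 1 = k by omega] at h1
          have h2 : p.choose k = p * c k := hck k (by rw [mem_Ico]; omega)
          rw [h2] at h1
          have h3 : p * ((p - 1).choose (k - 1)) = p * (k * c k) := by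
            rw [h1]; ring
          exact (Nat.eq_of_mul_eq_mul_left hp.pos h3).symm
        have hzm : (k : ZMod p) * (c k : ZMod p) = (-1) ^ (k - 1) := by
          have hcast := congrArg (fun x : ℕ => (x : ZMod p)) hnat
          push_cast at hcast
          rw [hcast]
          exact aux_choose_pred p hp (k - 1) (by omega)
        have hcval : (c k : ZMod p) = (k : ZMod p)⁻¹ * (-1) ^ (k - 1) := by
          rw [← hzm, ← mul_assoc, inv_mul_cancel₀ hkne, one_mul]
        rw [hcval, mul_pow, ← pow_mul, mul_comm (k - 1) 2, pow_mul, neg_one_sq, one_pow,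
          mul_one]
      rw [Finset.sum_congr rfl hterm]
      -- ∑_{k=1}^{p-1} (k⁻¹)^2 = ∑_{x ∈ ZMod p} (x⁻¹)^2 = ∑ x^2 = 0
      have hre : ∑ k ∈ Ico 1 p, ((k : ZMod p)⁻¹) ^ 2 = ∑ x : ZMod p, (x⁻¹) ^ 2 := by
        rw [show (univ : Finset (ZMod p)) = insert 0 ((univ : Finset (ZMod p)).erase 0) by
          rw [Finset.insert_erase (mem_univ 0)]]
        rw [Finset.sum_insert (Finset.notMem_erase _ _)]
        rw [show ((0 : ZMod p)⁻¹ ^ 2) = 0 by simp, zero_add]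
        refine Finset.sum_nbij' (fun k => (k : ZMod p)) (fun x => x.val) ?_ ?_ ?_ ?_ ?_
        · intro k hk
          rw [mem_Ico] at hk
          refine Finset.mem_erase.mpr ⟨?_, mem_univ _⟩
          rw [Ne, ZMod.natCast_eq_zero_iff]
          intro hd
          have := Nat.le_of_dvd (by omega) hd
          omega
        · intro x hx
          rw [Finset.mem_erase] at hx
          rw [mem_Ico]
          have h1 : x.val ≠ 0 := by
            intro h0
            exact hx.1 ((ZMod.val_eq_zero x).mp h0)
          exact ⟨Nat.one_le_iff_ne_zero.mpr h1, ZMod.val_lt x⟩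
        · intro k hk
          rw [mem_Ico] at hk
          exact ZMod.val_natCast_of_lt hk.2
        · intro x hx
          exact ZMod.natCast_rightInverse x
        · intro k hk; rfl
      rw [hre]
      have hinv : ∑ x : ZMod p, (x⁻¹) ^ 2 = ∑ x : ZMod p, x ^ 2 :=
        Fintype.sum_bijective (·⁻¹) inv_involutive.bijective _ _ (fun x => rfl)
      rw [hinv]
      exact FiniteField.sum_pow_lt_card_sub_one (K := ZMod p) 2 (by rw [ZMod.card]; omega)
    exact (ZMod.intCast_zmod_eq_zero_iff_dvd _ _).mp hz
  -- assemble
  obtain ⟨m, hm⟩ := hkey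
  refine ⟨-m, ?_⟩
  have hsum : (((2 * p).choose p : ℕ) : ℤ) = 2 + ∑ k ∈ Ico 1 p, ((p.choose k : ℤ)) ^ 2 := by
    rw [hsplit]; push_cast; ring
  have hS : ∑ k ∈ Ico 1 p, ((p.choose k : ℤ)) ^ 2
      = (p : ℤ) ^ 2 * ∑ k ∈ Ico 1 p, (c k : ℤ) ^ 2 := by
    rw [Finset.mul_sum]
    refine Finset.sum_congr rfl fun k hk => ?_
    have h2 : ((p.choose k : ℕ) : ℤ) = (p : ℤ) * (c k : ℤ) := by
      exact_mod_cast congrArg (fun x : ℕ => (x : ℤ)) (hck k hk)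
    rw [h2]; ring
  rw [hsum, hS, hm]
  ring
end

section
/- For every prime p > 5, p^5 divides 12 - 9*C(2p, p) + 2*C(3p, p). -/
open scoped Nat
open Polynomial Finset

-- Product of (X - a) over nonzero a in ZMod p
lemma prod_X_sub_C_nonzero (p : ℕ) [Fact p.Prime] :
    ∏ a ∈ (Finset.univ.erase (0 : ZMod p)), (X - C a) = X ^ (p - 1) - 1 := by
  have hcard : Fintype.card (ZMod p) = p := ZMod.card p
  have hp1 : 1 < p := (Fact.out (p := p.Prime)).one_lt
  have hall : ∏ a : ZMod p, (X - C a) = X ^ p - X := by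
    have hmonic : (X ^ p - X : (ZMod p)[X]).Monic := by
      apply Polynomial.monic_X_pow_sub
      simpa using (Nat.cast_lt.mpr hp1 : ((1:ℕ):WithBot ℕ) < p)
    have hnd : (X ^ p - X : (ZMod p)[X]).natDegree = p := by
      have := FiniteField.X_pow_card_sub_X_natDegree_eq (ZMod p) hp1
      simpa using this
    have hroots : (X ^ p - X : (ZMod p)[X]).roots = Finset.univ.val := by
      have := FiniteField.roots_X_pow_card_sub_X (ZMod p)
      rwa [hcard] at this
    have := Polynomial.prod_multiset_X_sub_C_of_monic_of_roots_card_eq hmonic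
      (by rw [hroots, hnd]; simpa using hcard)
    rw [hroots] at this
    rw [← this]
    rfl
  have hsplit : (X - C (0 : ZMod p)) * ∏ a ∈ (Finset.univ.erase (0 : ZMod p)), (X - C a)
      = X ^ p - X := by
    rw [← hall]
    exact Finset.mul_prod_erase Finset.univ (fun a : ZMod p => X - C a) (Finset.mem_univ 0)
  have hp1 : 1 ≤ p := (Fact.out (p := p.Prime)).one_lt.le
  have hX : (X ^ p - X : (ZMod p)[X]) = X * (X ^ (p-1) - 1) := by
    rw [mul_sub, mul_one, ← pow_succ']
    congr 1
    congr 1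
    omega
  apply mul_left_cancel₀ (Polynomial.X_ne_zero (R := ZMod p))
  rw [← hX, ← hsplit]
  simp

lemma coeff4_dvd (p : ℕ) (hp : p.Prime) (h : 5 < p) :
    (p:ℤ) ∣ (∏ k ∈ Finset.range (p-1), (X + C ((k:ℤ)+1))).coeff 4 := by
  haveI : Fact p.Prime := ⟨hp⟩
  haveI : NeZero p := ⟨by omega⟩
  rw [← ZMod.intCast_zmod_eq_zero_iff_dvd]
  have h1 : ((∏ k ∈ Finset.range (p-1), (X + C ((k:ℤ)+1))).coeff 4 : ZMod p)
      = ((∏ k ∈ Finset.range (p-1), (X + C ((k:ℤ)+1))).map (Int.castRingHom (ZMod p))).coeff 4 := by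
    rw [Polynomial.coeff_map]; rfl
  rw [h1, Polynomial.map_prod]
  have h2 : ∀ k ∈ Finset.range (p-1),
      (X + C ((k:ℤ)+1)).map (Int.castRingHom (ZMod p)) = X + C (((k+1:ℕ)) : ZMod p) := by
    intro k _
    rw [Polynomial.map_add, Polynomial.map_X, Polynomial.map_C]
    push_cast
    simp
  rw [Finset.prod_congr rfl h2]
  have h3 : ∏ k ∈ Finset.range (p-1), (X + C (((k+1:ℕ)) : ZMod p))
      = ∏ a ∈ (Finset.univ.erase (0 : ZMod p)), (X - C a) := by
    apply Finset.prod_nbij' (fun k => -(((k+1:ℕ)) : ZMod p)) (fun a => (-a).val - 1)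
    · intro k hk
      rw [Finset.mem_range] at hk
      rw [Finset.mem_erase]
      refine ⟨?_, Finset.mem_univ _⟩
      rw [neg_ne_zero, Ne, ZMod.natCast_eq_zero_iff]
      intro hd
      have := Nat.le_of_dvd (by omega) hd
      omega
    · intro a ha
      rw [Finset.mem_erase] at ha
      have h0 : (-a) ≠ 0 := by simpa using ha.1
      have hval : (-a).val ≠ 0 := fun hc => h0 (by rwa [← ZMod.val_eq_zero])
      have hlt : (-a).val < p := ZMod.val_lt _
      rw [Finset.mem_range]; omega
    · intro k hk
      rw [Finset.mem_range] at hk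
      rw [neg_neg, ZMod.val_natCast_of_lt (by omega)]
      omega
    · intro a ha
      rw [Finset.mem_erase] at ha
      have h0 : (-a) ≠ 0 := by simpa using ha.1
      have hval : (-a).val ≠ 0 := fun hc => h0 (by rwa [← ZMod.val_eq_zero])
      have : (-a).val - 1 + 1 = (-a).val := by omega
      rw [this, ZMod.natCast_val, ZMod.cast_id, neg_neg]
    · intro k hk
      rw [map_neg, sub_neg_eq_add]
  rw [h3, prod_X_sub_C_nonzero p, Polynomial.coeff_sub, Polynomial.coeff_X_pow,
    Polynomial.coeff_one]
  have : ¬ (4 = p - 1) := by omega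
  simp [this]

theorem stmt3 (p : ℕ) (hp : p.Prime) (h : 5 < p) :
    (p : ℤ)^5 ∣ 12 - 9 * (Nat.choose (2*p) p : ℤ) + 2 * (Nat.choose (3*p) p : ℤ) := by
  haveI : Fact p.Prime := ⟨hp⟩
  have heven : Even (p - 1) := Nat.Odd.sub_odd (hp.odd_of_ne_two (by omega)) odd_one
  set P : Polynomial ℤ := ∏ k ∈ range (p-1), (X + C ((k:ℤ)+1)) with hPdef
  have heval : ∀ x : ℤ, P.eval x = ∏ k ∈ range (p-1), (x + ((k:ℤ)+1)) := by
    intro x; rw [hPdef]; simp [Polynomial.eval_prod]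
  -- eval 0 = (p-1)!
  have heval0 : P.eval 0 = (((p-1)! : ℕ) : ℤ) := by
    rw [heval 0, ← Finset.prod_range_add_one_eq_factorial (p-1)]
    push_cast
    exact Finset.prod_congr rfl fun k _ => by ring
  -- reflection: eval (-p) = eval 0
  have hrefl1 : P.eval (-(p:ℤ)) = P.eval 0 := by
    rw [heval, heval]
    have := Finset.prod_range_reflect (fun k => (-(p:ℤ) + ((k:ℤ)+1))) (p-1)
    rw [← this]
    have hcongr : ∀ j ∈ range (p-1),
        (-(p:ℤ) + (((p - 1 - 1 - j : ℕ) : ℤ)+1)) = -((0:ℤ) + ((j:ℤ)+1)) := by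
      intro j hj; rw [Finset.mem_range] at hj; omega
    rw [Finset.prod_congr rfl hcongr]
    rw [Finset.prod_congr rfl (fun x _ => by ring :
      ∀ x ∈ range (p-1), -((0:ℤ) + ((x:ℤ)+1)) = (-1) * ((0:ℤ) + ((x:ℤ)+1)))]
    rw [Finset.prod_mul_distrib, Finset.prod_const, Finset.card_range, heven.neg_one_pow, one_mul]
  -- reflection: eval (-2p) = eval p
  have hrefl2 : P.eval (-(2*(p:ℤ))) = P.eval (p:ℤ) := by
    rw [heval, heval]
    have := Finset.prod_range_reflect (fun k => (-(2*(p:ℤ)) + ((k:ℤ)+1))) (p-1)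
    rw [← this]
    have hcongr : ∀ j ∈ range (p-1),
        (-(2*(p:ℤ)) + (((p - 1 - 1 - j : ℕ) : ℤ)+1)) = -(((p:ℤ)) + ((j:ℤ)+1)) := by
      intro j hj; rw [Finset.mem_range] at hj; omega
    rw [Finset.prod_congr rfl hcongr]
    rw [Finset.prod_congr rfl (fun x _ => by ring :
      ∀ x ∈ range (p-1), -(((p:ℤ)) + ((x:ℤ)+1)) = (-1) * (((p:ℤ)) + ((x:ℤ)+1)))]
    rw [Finset.prod_mul_distrib, Finset.prod_const, Finset.card_range, heven.neg_one_pow, one_mul]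
  -- choose identities
  have hA2 : ((2*p).choose p : ℤ) * ((p-1)! : ℕ) = 2 * P.eval (p:ℤ) := by
    have e1 : p ! * ∏ k ∈ range (p-1), (p + (k+1)) = (2*p - 1)! := by
      have c1 : (∏ i ∈ Ico 1 (p+1), i) * (∏ i ∈ Ico (p+1) (2*p), i)
          = ∏ i ∈ Ico 1 (2*p), i := Finset.prod_Ico_consecutive _ (by omega) (by omega)
      rw [Finset.prod_Ico_id_eq_factorial] at c1
      have c2 : ∏ i ∈ Ico (p+1) (2*p), i = ∏ k ∈ range (p-1), (p + (k+1)) := by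
        rw [Finset.prod_Ico_eq_prod_range]
        have : 2*p - (p+1) = p - 1 := by omega
        rw [this]
        exact Finset.prod_congr rfl fun k _ => by ring
      rw [c2] at c1
      have c3 : ∏ i ∈ Ico 1 (2*p), i = (2*p - 1)! := by
        have : 2*p = (2*p - 1) + 1 := by omega
        rw [this, Finset.prod_Ico_id_eq_factorial]
        congr 1
      rw [c3] at c1
      exact c1
    have e2 : (2*p).choose p * (p-1)! * (p * p !) = (2 * ∏ k ∈ range (p-1), (p + (k+1))) * (p * p !) := by
      have h1 : (2*p).choose p * p ! * p ! = (2*p)! := by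
        have := Nat.choose_mul_factorial_mul_factorial (show p ≤ 2*p by omega) (n := 2*p)
        simpa [show 2*p - p = p by omega] using this
      have h2 : p * (p-1)! = p ! := Nat.mul_factorial_pred (by omega)
      have h3 : (2*p) * (2*p - 1)! = (2*p)! := Nat.mul_factorial_pred (by omega)
      calc (2*p).choose p * (p-1)! * (p * p !)
          = (2*p).choose p * p ! * (p * (p-1)!) := by ring
        _ = (2*p).choose p * p ! * p ! := by rw [h2]
        _ = (2*p)! := h1
        _ = (2*p) * (2*p-1)! := h3.symm
        _ = (2*p) * (p ! * ∏ k ∈ range (p-1), (p + (k+1))) := by rw [e1]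
        _ = _ := by ring
    have e3 : (2*p).choose p * (p-1)! = 2 * ∏ k ∈ range (p-1), (p + (k+1)) :=
      Nat.eq_of_mul_eq_mul_right (by positivity) e2
    have e4 : P.eval (p:ℤ) = ((∏ k ∈ range (p-1), (p + (k+1)) : ℕ) : ℤ) := by
      rw [heval]
      push_cast
      exact Finset.prod_congr rfl fun k _ => by ring
    rw [e4]
    exact_mod_cast congrArg (Nat.cast : ℕ → ℤ) e3
  have hA3 : ((3*p).choose p : ℤ) * ((p-1)! : ℕ) = 3 * P.eval (2*(p:ℤ)) := by
    have e1 : (2*p)! * ∏ k ∈ range (p-1), (2*p + (k+1)) = (3*p - 1)! := by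
      have c1 : (∏ i ∈ Ico 1 (2*p+1), i) * (∏ i ∈ Ico (2*p+1) (3*p), i)
          = ∏ i ∈ Ico 1 (3*p), i := Finset.prod_Ico_consecutive _ (by omega) (by omega)
      rw [Finset.prod_Ico_id_eq_factorial] at c1
      have c2 : ∏ i ∈ Ico (2*p+1) (3*p), i = ∏ k ∈ range (p-1), (2*p + (k+1)) := by
        rw [Finset.prod_Ico_eq_prod_range]
        have : 3*p - (2*p+1) = p - 1 := by omega
        rw [this]
        exact Finset.prod_congr rfl fun k _ => by ring
      rw [c2] at c1
      have c3 : ∏ i ∈ Ico 1 (3*p), i = (3*p - 1)! := by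
        have : 3*p = (3*p - 1) + 1 := by omega
        rw [this, Finset.prod_Ico_id_eq_factorial]
        congr 1
      rw [c3] at c1
      exact c1
    have e2 : (3*p).choose p * (p-1)! * (p * (2*p)!) = (3 * ∏ k ∈ range (p-1), (2*p + (k+1))) * (p * (2*p)!) := by
      have h1 : (3*p).choose p * p ! * (2*p)! = (3*p)! := by
        have := Nat.choose_mul_factorial_mul_factorial (show p ≤ 3*p by omega) (n := 3*p)
        simpa [show 3*p - p = 2*p by omega] using this
      have h2 : p * (p-1)! = p ! := Nat.mul_factorial_pred (by omega)
      have h3 : (3*p) * (3*p - 1)! = (3*p)! := Nat.mul_factorial_pred (by omega)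
      calc (3*p).choose p * (p-1)! * (p * (2*p)!)
          = (3*p).choose p * (p * (p-1)!) * (2*p)! := by ring
        _ = (3*p).choose p * p ! * (2*p)! := by rw [h2]
        _ = (3*p)! := h1
        _ = (3*p) * (3*p-1)! := h3.symm
        _ = (3*p) * ((2*p)! * ∏ k ∈ range (p-1), (2*p + (k+1))) := by rw [e1]
        _ = _ := by ring
    have e3 : (3*p).choose p * (p-1)! = 3 * ∏ k ∈ range (p-1), (2*p + (k+1)) :=
      Nat.eq_of_mul_eq_mul_right (by positivity) e2
    have e4 : P.eval (2*(p:ℤ)) = ((∏ k ∈ range (p-1), (2*p + (k+1)) : ℕ) : ℤ) := by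
      rw [heval]
      push_cast
      exact Finset.prod_congr rfl fun k _ => by ring
    rw [e4]
    exact_mod_cast congrArg (Nat.cast : ℕ → ℤ) e3
  -- degree bound
  have hdeg : P.natDegree < p := by
    have h1 : P.natDegree ≤ ∑ k ∈ range (p-1), (X + C ((k:ℤ)+1)).natDegree :=
      Polynomial.natDegree_prod_le _ _
    have h2 : ∀ k ∈ range (p-1), (X + C ((k:ℤ)+1)).natDegree = 1 :=
      fun k _ => Polynomial.natDegree_X_add_C _
    rw [Finset.sum_congr rfl h2] at h1
    simp only [Finset.sum_const, Finset.card_range, smul_eq_mul, mul_one] at h1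
    omega
  -- the finite-difference sum
  set W : ℤ := P.eval (2*(p:ℤ)) - 4 * P.eval (p:ℤ) + 6 * P.eval 0
      - 4 * P.eval (-(p:ℤ)) + P.eval (-(2*(p:ℤ))) with hWdef
  set g : ℕ → ℤ := fun i => (2*(p:ℤ))^i - 4*(p:ℤ)^i + 6*(0:ℤ)^i - 4*(-(p:ℤ))^i + (-(2*(p:ℤ)))^i
    with hgdef
  have hW : W = ∑ i ∈ range p, P.coeff i * g i := by
    rw [hWdef]
    rw [Polynomial.eval_eq_sum_range' hdeg, Polynomial.eval_eq_sum_range' hdeg,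
      Polynomial.eval_eq_sum_range' hdeg, Polynomial.eval_eq_sum_range' hdeg,
      Polynomial.eval_eq_sum_range' hdeg]
    rw [Finset.mul_sum, Finset.mul_sum, Finset.mul_sum]
    rw [← Finset.sum_sub_distrib, ← Finset.sum_add_distrib, ← Finset.sum_sub_distrib,
      ← Finset.sum_add_distrib]
    exact Finset.sum_congr rfl fun i _ => by rw [hgdef]; ring
  have hg4 : g 4 = 24 * (p:ℤ)^4 := by simp only [hgdef]; ring
  have hWdvd : (p:ℤ)^5 ∣ W := by
    rw [hW, ← Finset.sum_erase_add (range p) _ (Finset.mem_range.mpr (by omega : 4 < p))]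
    apply dvd_add
    · apply Finset.dvd_sum
      intro i hi
      rw [Finset.mem_erase, Finset.mem_range] at hi
      rcases Nat.lt_or_ge i 5 with h5 | h5
      · have hgi : g i = 0 := by
          interval_cases i
          · simp only [hgdef]; norm_num
          · simp only [hgdef]; ring
          · simp only [hgdef]; ring
          · simp only [hgdef]; ring
          · exact absurd rfl hi.1
        rw [hgi, mul_zero]
        exact dvd_zero _
      · apply Dvd.dvd.mul_left
        have hp5 : (p:ℤ)^5 ∣ (p:ℤ)^i := pow_dvd_pow _ h5
        have e1 : (-(p:ℤ))^i = (-1)^i * (p:ℤ)^i := by rw [neg_pow]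
        have e2 : (-(2*(p:ℤ)))^i = (-1)^i * ((2:ℤ)^i * (p:ℤ)^i) := by rw [neg_pow, mul_pow]
        have e3 : (2*(p:ℤ))^i = (2:ℤ)^i * (p:ℤ)^i := mul_pow _ _ _
        have : g i = (p:ℤ)^i * ((2:ℤ)^i - 4 + (-1:ℤ)^i * (-4) + (-1:ℤ)^i * (2:ℤ)^i) := by
          simp only [hgdef]
          rw [e1, e2, e3, zero_pow (by omega : i ≠ 0)]
          ring
        rw [this]
        exact Dvd.dvd.mul_right hp5 _
    · obtain ⟨m, hm⟩ := coeff4_dvd p hp h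
      rw [← hPdef] at hm
      rw [hm, hg4]
      exact ⟨24 * m, by ring⟩
  -- assemble
  have key : (((p-1)! : ℕ) : ℤ) * (12 - 9 * ((2*p).choose p : ℤ) + 2 * ((3*p).choose p : ℤ))
      = 6 * W := by
    rw [hWdef, hrefl1, hrefl2, heval0]
    linear_combination (-9 : ℤ) * hA2 + 2 * hA3
  have hdvd6W : (p:ℤ)^5 ∣ (((p-1)! : ℕ) : ℤ) * (12 - 9 * ((2*p).choose p : ℤ) + 2 * ((3*p).choose p : ℤ)) := by
    rw [key]
    exact Dvd.dvd.mul_left hWdvd 6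
  have hcop : IsCoprime ((p:ℤ)^5) (((p-1)! : ℕ) : ℤ) := by
    have h1 : Nat.Coprime p ((p-1)!) := by
      rw [Nat.Prime.coprime_iff_not_dvd hp, hp.dvd_factorial]
      omega
    have h2 : Nat.Coprime (p^5) ((p-1)!) := Nat.Coprime.pow_left 5 h1
    have := Int.isCoprime_iff_gcd_eq_one.mpr (by
      rw [Int.gcd_natCast_natCast]; exact h2)
    push_cast at this
    exact this
  exact hcop.dvd_of_dvd_mul_left hdvd6W
end

section
/- For all integers a ≥ b ≥ 0 and every prime p > 3, C(a*p, b*p) is congruent to C(a, b) modulo p^3. -/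
open Finset

lemma choose_pred_cast (p : ℕ) (hp : p.Prime) (k : ℕ) (hk : k < p) :
    (((p-1).choose k : ℤ) : ZMod p) = (-1)^k := by
  induction k with
  | zero => simp
  | succ n ih =>
    have hn : n < p := Nat.lt_of_succ_lt hk
    have pas : (p-1).choose n + (p-1).choose (n+1) = p.choose (n+1) := by
      have h1 : p - 1 + 1 = p := Nat.succ_pred_eq_of_pos hp.pos
      conv_rhs => rw [← h1, Nat.choose_succ_succ]
    have h0 : (((p.choose (n+1) : ℕ) : ℤ) : ZMod p) = 0 := by
      rw [ZMod.intCast_zmod_eq_zero_iff_dvd]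
      exact_mod_cast Int.natCast_dvd_natCast.2 (Nat.Prime.dvd_choose_self hp (Nat.succ_ne_zero n) hk)
    have hc := congrArg (fun m : ℕ => ((m : ℤ) : ZMod p)) pas
    simp only [Nat.cast_add, Int.cast_add, Int.cast_natCast] at hc
    push_cast at hc h0 ih ⊢
    rw [h0, ih hn] at hc
    linear_combination hc

lemma c_mul_self (p : ℕ) (hp : p.Prime) {i : ℕ} (h1 : 0 < i) (h2 : i < p) :
    (p.choose i / p) * i = (p-1).choose (i-1) := by
  have key : (p-1).succ * (p-1).choose (i-1) = (p-1).succ.choose (i-1).succ * (i-1).succ :=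
    Nat.add_one_mul_choose_eq (p-1) (i-1)
  have hps : (p-1).succ = p := Nat.succ_pred_eq_of_pos hp.pos
  have his : (i-1).succ = i := Nat.succ_pred_eq_of_pos h1
  rw [hps, his] at key
  -- key : p * (p-1).choose (i-1) = p.choose i * i
  have hd : p ∣ p.choose i := hp.dvd_choose_self (Nat.pos_iff_ne_zero.1 h1) h2
  have h4 : p.choose i = p * (p.choose i / p) := (Nat.mul_div_cancel' hd).symm
  rw [h4] at key
  have := Nat.eq_of_mul_eq_mul_left hp.pos (by linarith [key] : p * ((p-1).choose (i-1)) = p * (p.choose i / p * i))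
  omega

lemma c_cast (p : ℕ) (hp : p.Prime) {i : ℕ} (h1 : 0 < i) (h2 : i < p) :
    ((p.choose i / p : ℕ) : ZMod p) = (-1)^(i-1) * (i : ZMod p)⁻¹ := by
  haveI := Fact.mk hp
  have hne : (i : ZMod p) ≠ 0 := by
    rw [Ne, ZMod.natCast_eq_zero_iff]
    exact fun hd => Nat.not_dvd_of_pos_of_lt h1 h2 hd
  have hm := c_mul_self p hp h1 h2
  have := congrArg (fun m : ℕ => (m : ZMod p)) hm
  simp only [Nat.cast_mul] at this
  have h3 : ((p-1).choose (i-1) : ZMod p) = (-1)^(i-1) := by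
    have := choose_pred_cast p hp (i-1) (lt_of_le_of_lt (Nat.sub_le _ _) h2)
    push_cast at this; exact this
  rw [h3] at this
  rw [eq_comm] at this
  rw [eq_mul_inv_iff_mul_eq₀ hne]
  linear_combination -this
lemma key_sum (p : ℕ) (hp : p.Prime) (h3 : 3 < p) :
    (p : ℤ) ∣ ∑ i ∈ Finset.Ioo 0 p, ((p.choose i / p : ℕ) : ℤ) * ((p.choose (p-i) / p : ℕ) : ℤ) := by
  haveI := Fact.mk hp
  rw [← ZMod.intCast_zmod_eq_zero_iff_dvd]
  rw [Int.cast_sum]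
  simp only [Int.cast_mul, Int.cast_natCast]
  have step : ∀ i ∈ Finset.Ioo 0 p,
      ((p.choose i / p : ℕ) : ZMod p) * ((p.choose (p-i) / p : ℕ) : ZMod p)
      = ((i : ZMod p)⁻¹)^2 := by
    intro i hi
    rw [Finset.mem_Ioo] at hi
    obtain ⟨h1, h2⟩ := hi
    have h1' : 0 < p - i := by omega
    have h2' : p - i < p := by omega
    rw [c_cast p hp h1 h2, c_cast p hp h1' h2']
    have hcast : ((p - i : ℕ) : ZMod p) = -(i : ZMod p) := by
      have : ((p - i : ℕ) : ZMod p) = (p : ZMod p) - (i : ZMod p) := by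
        rw [Nat.cast_sub (le_of_lt h2)]
      rw [this, ZMod.natCast_self, zero_sub]
    rw [hcast, inv_neg]
    have hodd : Odd (p - 2) := Nat.Odd.sub_even (by omega) (hp.odd_of_ne_two (by omega)) (by decide)
    have hexp : (i - 1) + (p - i - 1) = p - 2 := by omega
    have : ((-1 : ZMod p))^(i-1) * ((-1 : ZMod p))^(p-i-1) = -1 := by
      rw [← pow_add, hexp, hodd.neg_one_pow]
    calc (-1 : ZMod p)^(i-1) * (i : ZMod p)⁻¹ * ((-1)^(p-i-1) * -(i : ZMod p)⁻¹)
        = ((-1 : ZMod p))^(i-1) * ((-1 : ZMod p))^(p-i-1) * -((i:ZMod p)⁻¹)^2 := by ring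
      _ = ((i : ZMod p)⁻¹)^2 := by rw [this]; ring
  rw [Finset.sum_congr rfl step]
  -- now sum over Ioo 0 p of (i⁻¹)^2 = sum over all of ZMod p
  have hbij : ∑ i ∈ Finset.Ioo 0 p, ((i : ZMod p)⁻¹)^2
      = ∑ x ∈ (Finset.univ : Finset (ZMod p)) \ {0}, (x⁻¹)^2 := by
    refine Finset.sum_nbij' (fun i => ((i : ZMod p))) (fun x => x.val) ?_ ?_ ?_ ?_ ?_
    · intro a ha
      rw [Finset.mem_Ioo] at ha
      simp only [Finset.mem_sdiff, Finset.mem_univ, Finset.mem_singleton, true_and]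
      intro hd
      rw [ZMod.natCast_eq_zero_iff] at hd
      exact Nat.not_dvd_of_pos_of_lt ha.1 ha.2 hd
    · intro x hx
      simp only [Finset.mem_sdiff, Finset.mem_univ, Finset.mem_singleton, true_and] at hx
      rw [Finset.mem_Ioo]
      refine ⟨Nat.pos_of_ne_zero fun h0 => hx ?_, ZMod.val_lt x⟩
      exact (ZMod.val_eq_zero x).1 h0
    · intro a ha
      rw [Finset.mem_Ioo] at ha
      exact ZMod.val_natCast_of_lt ha.2
    · intro x hx
      simp [ZMod.natCast_val, ZMod.cast_id]
    · intro a ha; rfl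
  rw [hbij]
  have hzero : ∑ x ∈ (Finset.univ : Finset (ZMod p)) \ {0}, ((x⁻¹)^2 : ZMod p)
      = ∑ x : ZMod p, (x⁻¹)^2 := by
    apply Finset.sum_subset (Finset.sdiff_subset)
    intro x _ hx
    simp only [Finset.mem_sdiff, Finset.mem_univ, Finset.mem_singleton, true_and, not_not] at hx
    rw [hx]; simp
  rw [hzero]
  have hinv : ∑ x : ZMod p, ((x⁻¹)^2 : ZMod p) = ∑ x : ZMod p, (x^2 : ZMod p) := by
    exact Equiv.sum_comp (Equiv.inv (ZMod p)) (fun x : ZMod p => x^2)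
  rw [hinv]
  have hcard : 2 < Fintype.card (ZMod p) - 1 := by rw [ZMod.card]; omega
  exact FiniteField.sum_pow_lt_card_sub_one (ZMod p) 2 hcard

open Polynomial in
noncomputable def Epoly (p : ℕ) : ℤ[X] :=
  ∑ k ∈ Finset.Ioo 0 p, Polynomial.C ((p.choose k / p : ℕ) : ℤ) * Polynomial.X ^ k

open Polynomial

lemma Epoly_coeff (p n : ℕ) : (Epoly p).coeff n =
    if n ∈ Finset.Ioo 0 p then ((p.choose n / p : ℕ) : ℤ) else 0 := by
  rw [Epoly, finset_sum_coeff]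
  simp only [coeff_C_mul, coeff_X_pow, mul_ite, mul_one, mul_zero]
  rw [Finset.sum_ite_eq (Finset.Ioo 0 p) n (fun k => ((p.choose k / p : ℕ) : ℤ))]

lemma pow_p_eq (p : ℕ) (hp : p.Prime) :
    (X + 1 : ℤ[X])^p = (X^p + 1) + C (p:ℤ) * Epoly p := by
  ext n
  rw [coeff_X_add_one_pow]
  simp only [coeff_add, coeff_X_pow, coeff_one, coeff_C_mul, Epoly_coeff, Finset.mem_Ioo,
    mul_ite, mul_zero]
  by_cases h0 : n = 0
  · subst h0
    rw [Nat.choose_zero_right, if_neg (show ¬(0 = p) from fun h => hp.pos.ne h),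
      if_pos rfl, if_neg (show ¬(0 < 0 ∧ 0 < p) by omega)]
    norm_num
  by_cases hP : n = p
  · rw [hP, Nat.choose_self, if_pos rfl, if_neg (show ¬(p = 0) from hp.pos.ne'),
      if_neg (show ¬(0 < p ∧ p < p) by omega)]
    norm_num
  by_cases hI : n < p
  · have hn : 0 < n := Nat.pos_of_ne_zero h0
    rw [if_neg hP, if_neg h0, if_pos ⟨hn, hI⟩]
    rw [← Nat.cast_mul, Nat.mul_div_cancel' (hp.dvd_choose_self h0 hI)]
    ring
  · have hgt : p < n := by omega
    rw [if_neg hP, if_neg h0, if_neg (by omega), Nat.choose_eq_zero_of_lt hgt]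
    simp

lemma coeff_XpowP (p : ℕ) (hp : 0 < p) (n m : ℕ) :
    ((X^p + 1 : ℤ[X])^n).coeff m = if p ∣ m then (n.choose (m/p) : ℤ) else 0 := by
  have h : (X^p + 1 : ℤ[X])^n = expand ℤ p ((X+1)^n) := by
    rw [map_pow, map_add, expand_X, map_one]
  rw [h, coeff_expand hp]
  split_ifs with hd
  · rw [coeff_X_add_one_pow]
  · rfl

lemma coeff_E_mul (p : ℕ) (hp : 0 < p) (b n : ℕ) :
    (Epoly p * (X^p + 1 : ℤ[X])^n).coeff (b*p) = 0 := by
  rw [coeff_mul]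
  apply Finset.sum_eq_zero
  rintro ⟨k, m⟩ hkm
  rw [Finset.HasAntidiagonal.mem_antidiagonal] at hkm
  by_cases hm : p ∣ m
  · have hk : p ∣ k := by
      have hbp : p ∣ k + m := hkm ▸ dvd_mul_left p b
      rw [Nat.add_comm] at hbp
      exact (Nat.dvd_add_right hm).1 hbp
    rw [Epoly_coeff, if_neg, zero_mul]
    rw [Finset.mem_Ioo]
    rintro ⟨h1, h2⟩
    exact Nat.not_dvd_of_pos_of_lt h1 h2 hk
  · rw [coeff_XpowP p hp, if_neg hm, mul_zero]

lemma dvd_coeff_E2 (p : ℕ) (hp : p.Prime) (h3 : 3 < p) (n b : ℕ) :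
    (p:ℤ) ∣ ((Epoly p)^2 * (X^p + 1 : ℤ[X])^n).coeff (b*p) := by
  rw [coeff_mul]
  apply Finset.dvd_sum
  rintro ⟨k, m⟩ hkm
  rw [Finset.HasAntidiagonal.mem_antidiagonal] at hkm
  by_cases hm : p ∣ m
  · have hk : p ∣ k := by
      have hbp : p ∣ k + m := hkm ▸ dvd_mul_left p b
      rw [Nat.add_comm] at hbp
      exact (Nat.dvd_add_right hm).1 hbp
    suffices hdd : (p:ℤ) ∣ ((Epoly p)^2).coeff k from hdd.mul_right _
    rw [sq, coeff_mul]
    by_cases hk0 : k = 0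
    · subst hk0
      have hz : ∀ x ∈ Finset.HasAntidiagonal.antidiagonal 0, (Epoly p).coeff x.1 * (Epoly p).coeff x.2 = 0 := by
        rintro ⟨i, j⟩ hij
        rw [Finset.HasAntidiagonal.mem_antidiagonal] at hij
        have hi0 : i = 0 := by omega
        subst hi0
        rw [Epoly_coeff]
        simp
      rw [Finset.sum_eq_zero hz]
      exact dvd_zero _
    by_cases hkp : k = p
    · rw [hkp]
      rw [Finset.Nat.sum_antidiagonal_eq_sum_range_succ_mk]
      have hsubset : Finset.Ioo 0 p ⊆ Finset.range (p+1) := by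
        intro x hx
        rw [Finset.mem_Ioo] at hx
        rw [Finset.mem_range]
        omega
      have hvanish : ∀ i ∈ Finset.range (p+1), i ∉ Finset.Ioo 0 p →
          (Epoly p).coeff i * (Epoly p).coeff (p - i) = 0 := by
        intro i hi hni
        rw [Finset.mem_range] at hi
        rw [Finset.mem_Ioo] at hni
        by_cases hi0 : i = 0
        · subst hi0
          rw [Epoly_coeff, if_neg (by rw [Finset.mem_Ioo]; omega), zero_mul]
        · have hip : i = p := by omega
          rw [hip, Nat.sub_self, Epoly_coeff p 0, if_neg (by rw [Finset.mem_Ioo]; omega), mul_zero]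
      rw [← Finset.sum_subset hsubset hvanish]
      have hcong : ∀ i ∈ Finset.Ioo 0 p, (Epoly p).coeff i * (Epoly p).coeff (p - i)
          = ((p.choose i / p : ℕ) : ℤ) * ((p.choose (p-i) / p : ℕ) : ℤ) := by
        intro i hi
        rw [Finset.mem_Ioo] at hi
        rw [Epoly_coeff, Epoly_coeff, if_pos (Finset.mem_Ioo.2 hi),
          if_pos (Finset.mem_Ioo.2 ⟨by omega, by omega⟩)]
      rw [Finset.sum_congr rfl hcong]
      exact key_sum p hp h3
    · have h2p : 2*p ≤ k := by
        rcases hk with ⟨c, rfl⟩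
        have : c ≠ 0 := by rintro rfl; simp at hk0
        have : c ≠ 1 := by rintro rfl; simp at hkp
        calc 2*p = p*2 := by ring
          _ ≤ p*c := Nat.mul_le_mul_left p (by omega)
      have hz : ∀ x ∈ Finset.HasAntidiagonal.antidiagonal k, (Epoly p).coeff x.1 * (Epoly p).coeff x.2 = 0 := by
        rintro ⟨i, j⟩ hij
        rw [Finset.HasAntidiagonal.mem_antidiagonal] at hij
        by_cases hiI : i ∈ Finset.Ioo 0 p
        · have hj : j ∉ Finset.Ioo 0 p := by
            rw [Finset.mem_Ioo] at hiI ⊢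
            omega
          rw [Epoly_coeff p j, if_neg hj, mul_zero]
        · rw [Epoly_coeff p i, if_neg hiI, zero_mul]
      rw [Finset.sum_eq_zero hz]
      exact dvd_zero _
  · rw [coeff_XpowP p hp.pos, if_neg hm, mul_zero]
    exact dvd_zero _

theorem ljunggren (a b p : ℕ) (hab : b ≤ a) (hp : p.Prime) (h : 3 < p) :
    Nat.choose (a*p) (b*p) ≡ Nat.choose a b [MOD p^3] := by
  rw [Nat.modEq_iff_dvd]
  push_cast
  suffices hd : (p:ℤ)^3 ∣ (((a*p).choose (b*p) : ℤ) - (a.choose b : ℤ)) by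
    have := hd.neg_right
    rwa [neg_sub] at this
  have hpoly : ((X + 1 : ℤ[X]))^(a*p)
      = ∑ j ∈ Finset.range (a+1), (C (p:ℤ) * Epoly p)^j * ((X:ℤ[X])^p + 1)^(a - j)
        * ((a.choose j : ℕ) : ℤ[X]) := by
    rw [mul_comm a p, pow_mul, pow_p_eq p hp, add_comm ((X:ℤ[X])^p + 1), add_pow]
  have hco := congrArg (fun f : ℤ[X] => f.coeff (b*p)) hpoly
  rw [coeff_X_add_one_pow, finset_sum_coeff] at hco
  have hterm : ∀ j ∈ Finset.range (a+1),
      ((C (p:ℤ) * Epoly p)^j * ((X:ℤ[X])^p + 1)^(a - j) * ((a.choose j : ℕ) : ℤ[X])).coeff (b*p)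
      = (p:ℤ)^j * ((Epoly p)^j * ((X:ℤ[X])^p + 1)^(a - j)).coeff (b*p) * (a.choose j : ℤ) := by
    intro j _
    rw [← C_eq_natCast, mul_pow, ← C_pow, mul_assoc (C ((p:ℤ)^j)), coeff_mul_C, coeff_C_mul]
  rw [Finset.sum_congr rfl hterm, Finset.sum_range_succ'] at hco
  have hzero : (p:ℤ)^0 * ((Epoly p)^0 * ((X:ℤ[X])^p + 1)^(a - 0)).coeff (b*p) * (a.choose 0 : ℤ)
      = (a.choose b : ℤ) := by
    rw [pow_zero, pow_zero, one_mul, Nat.choose_zero_right, Nat.cast_one, mul_one, one_mul]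
    rw [coeff_XpowP p hp.pos, if_pos (dvd_mul_left p b), Nat.sub_zero,
      Nat.mul_div_cancel b hp.pos]
  rw [hzero] at hco
  have : ((a*p).choose (b*p) : ℤ) - (a.choose b : ℤ)
      = ∑ j ∈ Finset.range a, (p:ℤ)^(j+1)
        * ((Epoly p)^(j+1) * ((X:ℤ[X])^p + 1)^(a - (j+1))).coeff (b*p) * (a.choose (j+1) : ℤ) := by
    rw [hco]; ring
  rw [this]
  apply Finset.dvd_sum
  intro j _
  match j with
  | 0 =>
    rw [pow_one, pow_one, coeff_E_mul p hp.pos, mul_zero, zero_mul]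
    exact dvd_zero _
  | 1 =>
    have hdvd := dvd_coeff_E2 p hp h (a - 2) b
    have : (p:ℤ)^3 = (p:ℤ)^2 * p := by ring
    rw [this]
    exact mul_dvd_mul (dvd_refl _) hdvd |>.mul_right _
  | (n+2) =>
    exact ((pow_dvd_pow (p:ℤ) (by omega)).mul_right _).mul_right _
end

section
/- For all integers a > b > 0 and every prime p > 3, p^{3 + v} divides C(a*p, b*p) - C(a, b), where v is the p-adic valuation of a*b*(a-b). -/
namespace Jacobsthal

variable (p : ℕ)

def S (m : ℕ) : Finset ℕ := (Finset.Ico 1 (m*p+1)).filter (fun k => ¬ p ∣ k)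

def P (m : ℕ) : ℕ := ∏ k ∈ S p m, k

def H (m : ℕ) : Finset ℕ := (S p m).filter (fun k => 2*k < m*p)

lemma mem_S {m k : ℕ} : k ∈ S p m ↔ (1 ≤ k ∧ k < m*p+1 ∧ ¬ p ∣ k) := by
  simp [S, Finset.mem_filter, Finset.mem_Ico, and_assoc]

lemma mem_H {m k : ℕ} : k ∈ H p m ↔ (1 ≤ k ∧ k < m*p+1 ∧ ¬ p ∣ k ∧ 2*k < m*p) := by
  simp [H, Finset.mem_filter, mem_S, and_assoc]

lemma factorial_eq (hp : 0 < p) (m : ℕ) :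
    (m*p).factorial = p^m * m.factorial * P p m := by
  have h1 : (m*p).factorial = ∏ x ∈ Finset.Ico 1 (m*p+1), x :=
    (Finset.prod_Ico_id_eq_factorial (m*p)).symm
  rw [h1, ← Finset.prod_filter_mul_prod_filter_not (Finset.Ico 1 (m*p+1)) (fun k => p ∣ k)
    (fun x => x)]
  have h2 : (Finset.Ico 1 (m*p+1)).filter (fun k => p ∣ k)
      = (Finset.Ico 1 (m+1)).image (fun j => p * j) := by
    ext k
    simp only [Finset.mem_filter, Finset.mem_Ico, Finset.mem_image]
    constructor
    · rintro ⟨⟨h1k, h2k⟩, t, rfl⟩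
      have ht0 : 1 ≤ t := by
        rcases Nat.eq_zero_or_pos t with rfl | h
        · simp at h1k
        · exact h
      have htm : t ≤ m := by
        have hle : p*t ≤ p*m := by rw [mul_comm p m]; omega
        exact Nat.le_of_mul_le_mul_left hle hp
      exact ⟨t, ⟨ht0, by omega⟩, rfl⟩
    · rintro ⟨j, ⟨hj1, hj2⟩, rfl⟩
      have h1 : 1 ≤ p*j := Nat.mul_pos hp hj1
      have h2 : p*j ≤ p*m := Nat.mul_le_mul_left p (by omega)
      have h3 : p*m = m*p := mul_comm p m
      exact ⟨⟨by omega, by omega⟩, ⟨j, rfl⟩⟩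
  have h3 : ∏ x ∈ (Finset.Ico 1 (m*p+1)).filter (fun k => p ∣ k), (x:ℕ)
      = p^m * m.factorial := by
    rw [h2, Finset.prod_image (by intro x _ y _ h; exact Nat.eq_of_mul_eq_mul_left hp h)]
    rw [Finset.prod_mul_distrib, Finset.prod_const, Nat.card_Ico,
      Finset.prod_Ico_id_eq_factorial]
    simp
  rw [h3]
  rfl

lemma P_shift (m s : ℕ) :
    P p (m+s) = P p s * ∏ k ∈ S p m, (k + s*p) := by
  have hmul : (m+s)*p = m*p + s*p := add_mul m s p
  have hsplit : Finset.Ico 1 ((m+s)*p+1) = Finset.Ico 1 (s*p+1) ∪ Finset.Ico (s*p+1) ((m+s)*p+1) := by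
    rw [Finset.Ico_union_Ico_eq_Ico (by omega) (by omega)]
  have hdisj : Disjoint ((Finset.Ico 1 (s*p+1)).filter (fun k => ¬ p ∣ k))
      ((Finset.Ico (s*p+1) ((m+s)*p+1)).filter (fun k => ¬ p ∣ k)) := by
    apply Finset.disjoint_filter_filter
    exact Finset.Ico_disjoint_Ico_consecutive 1 (s*p+1) ((m+s)*p+1)
  rw [P, S, hsplit, Finset.filter_union, Finset.prod_union hdisj]
  congr 1
  apply Finset.prod_nbij' (fun k => k - s*p) (fun k => k + s*p)
  · intro a ha
    simp only [Finset.mem_filter, Finset.mem_Ico] at ha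
    rw [mem_S]
    refine ⟨by omega, by omega, ?_⟩
    intro hd
    apply ha.2
    have hsp : p ∣ s*p := Dvd.intro_left s rfl
    have := Nat.dvd_add hd hsp
    rwa [Nat.sub_add_cancel (by omega)] at this
  · intro a ha
    rw [mem_S] at ha
    simp only [Finset.mem_filter, Finset.mem_Ico]
    refine ⟨⟨by omega, by omega⟩, ?_⟩
    intro hd
    apply ha.2.2
    have hsp : p ∣ s*p := Dvd.intro_left s rfl
    have := Nat.dvd_sub hd hsp
    simpa using this
  · intro a ha
    simp only [Finset.mem_filter, Finset.mem_Ico] at ha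
    omega
  · intro a _; omega
  · intro a ha
    simp only [Finset.mem_filter, Finset.mem_Ico] at ha
    omega

@[to_additive]
lemma prod_pairing (hp : p.Prime) (h3 : 3 < p) (m : ℕ) {M : Type*} [CommMonoid M] (f : ℕ → M) :
    ∏ k ∈ S p m, f k = ∏ k ∈ H p m, (f k * f (m*p - k)) := by
  have hdvd_mp : p ∣ m*p := Dvd.intro_left m rfl
  rw [← Finset.prod_filter_mul_prod_filter_not (S p m) (fun k => 2*k < m*p) f,
    Finset.prod_mul_distrib]
  congr 1
  apply Finset.prod_nbij' (fun k => m*p - k) (fun k => m*p - k)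
  · intro a ha
    simp only [Finset.mem_filter, mem_S p] at ha
    obtain ⟨⟨ha1, ha2, ha3⟩, ha4⟩ := ha
    have hne : 2*a ≠ m*p := by
      intro h
      rcases (Nat.Prime.dvd_mul hp).mp (h ▸ hdvd_mp) with h2 | hk
      · have := Nat.le_of_dvd (by norm_num) h2; omega
      · exact ha3 hk
    have hnd : ¬ p ∣ (m*p - a) := by
      intro hd
      have := Nat.dvd_sub hdvd_mp hd
      rw [Nat.sub_sub_self (by omega)] at this
      exact ha3 this
    have ha5 : a ≠ m*p := fun h => ha3 (h ▸ hdvd_mp)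
    rw [mem_H]
    exact ⟨by omega, by omega, hnd, by omega⟩
  · intro a ha
    rw [mem_H] at ha
    obtain ⟨ha1, ha2, ha3, ha4⟩ := ha
    have hnd : ¬ p ∣ (m*p - a) := by
      intro hd
      have := Nat.dvd_sub hdvd_mp hd
      rw [Nat.sub_sub_self (by omega)] at this
      exact ha3 this
    simp only [Finset.mem_filter, mem_S p]
    exact ⟨⟨by omega, by omega, hnd⟩, by omega⟩
  · intro a ha
    simp only [Finset.mem_filter, mem_S p] at ha
    omega
  · intro a ha
    rw [mem_H] at ha
    omega
  · intro a ha
    simp only [Finset.mem_filter, mem_S p] at ha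
    rw [Nat.sub_sub_self (by omega)]

end Jacobsthal
set_option linter.unusedSectionVars false

namespace Jacobsthal2

lemma sq_sum_range (n : ℕ) :
    6 * ∑ i ∈ Finset.range n, (i:ℤ)^2 = 2*(n:ℤ)^3 - 3*(n:ℤ)^2 + n := by
  induction n with
  | zero => simp
  | succ k ih =>
    rw [Finset.sum_range_succ, mul_add, ih]
    push_cast
    ring

lemma sum_periodic {M : Type*} [AddCommMonoid M] (F : ℕ → M) (n : ℕ)
    (hF : ∀ k, F (k+n) = F k) (c : ℕ) :
    ∑ k ∈ Finset.range (c*n), F k = c • ∑ k ∈ Finset.range n, F k := by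
  have haux : ∀ c x, F (x + c*n) = F x := by
    intro c
    induction c with
    | zero => simp
    | succ c ih =>
      intro x
      have : x + (c+1)*n = (x + c*n) + n := by ring
      rw [this, hF, ih]
  induction c with
  | zero => simp
  | succ c ih =>
    have : (c+1)*n = c*n + n := by ring
    rw [this, Finset.sum_range_add, ih, succ_nsmul]
    congr 1
    apply Finset.sum_congr rfl
    intro x _
    rw [add_comm (c*n) x, haux]

section Core
variable (p d : ℕ) (hp : p.Prime) (h3 : 3 < p) [NeZero (p^(d+1))]

local notation "n" => p^(d+1)

lemma p_pow_zero : ((p : ZMod n))^(d+1) = 0 := by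
  have h := ZMod.natCast_self (p^(d+1))
  push_cast at h
  exact h

include hp h3 in
lemma coprime_six : Nat.Coprime 6 p := by
  rw [Nat.coprime_comm]
  refine (Nat.Prime.coprime_iff_not_dvd hp).mpr ?_
  intro hdvd
  have hle := Nat.le_of_dvd (by norm_num) hdvd
  interval_cases p <;> revert hp hdvd <;> decide

include hp h3 in
lemma six_unit : IsUnit (6 : ZMod n) := by
  have h := (ZMod.isUnit_iff_coprime 6 (p^(d+1))).mpr
    (Nat.Coprime.pow_right _ (coprime_six p hp h3))
  simpa using h

include hp h3 in
lemma two_unit : IsUnit (2 : ZMod n) := by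
  have hc : Nat.Coprime 2 p := by
    rw [Nat.coprime_comm]
    refine (Nat.Prime.coprime_iff_not_dvd hp).mpr ?_
    intro hdvd
    have := Nat.le_of_dvd (by norm_num) hdvd
    omega
  have h := (ZMod.isUnit_iff_coprime 2 (p^(d+1))).mpr (Nat.Coprime.pow_right _ hc)
  simpa using h

include hp in
lemma isUnit_cast_iff (k : ℕ) : IsUnit ((k : ZMod n)) ↔ ¬ p ∣ k := by
  rw [ZMod.isUnit_iff_coprime, Nat.coprime_pow_right_iff (Nat.succ_pos d),
    Nat.coprime_comm, Nat.Prime.coprime_iff_not_dvd hp]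

lemma sum_sq_all : 6 * ∑ k ∈ Finset.range n, ((k : ZMod n))^2 = 0 := by
  have key := sq_sum_range n
  have step : 6 * ∑ k ∈ Finset.range n, ((k : ZMod n))^2
      = ((2*((n:ℕ):ℤ)^3 - 3*((n:ℕ):ℤ)^2 + ((n:ℕ):ℤ) : ℤ) : ZMod n) := by
    rw [← key]
    push_cast
    ring
  rw [step]
  push_cast
  rw [p_pow_zero]
  ring

include hp in
lemma sum_sq_mult :
    6 * ∑ k ∈ (Finset.range n).filter (fun k => p ∣ k), ((k : ZMod n))^2 = 0 := by
  have hp0 : 0 < p := hp.pos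
  have hswap : ∑ k ∈ (Finset.range n).filter (fun k => p ∣ k), ((k : ZMod n))^2
      = ∑ j ∈ Finset.range (p^d), (((p*j : ℕ) : ZMod n))^2 := by
    apply Finset.sum_nbij' (fun k => k / p) (fun j => p * j)
    · intro a ha
      simp only [Finset.mem_filter, Finset.mem_range] at ha
      rw [Finset.mem_range, Nat.div_lt_iff_lt_mul hp0]
      calc a < p^(d+1) := ha.1
        _ = p^d * p := by ring
    · intro a ha
      simp only [Finset.mem_range] at ha
      simp only [Finset.mem_filter, Finset.mem_range]
      constructor
      · calc p*a < p*p^d := (Nat.mul_lt_mul_left hp0).mpr ha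
          _ = p^(d+1) := by ring
      · exact Dvd.intro a rfl
    · intro a ha
      simp only [Finset.mem_filter, Finset.mem_range] at ha
      exact Nat.mul_div_cancel' ha.2
    · intro a _
      exact Nat.mul_div_cancel_left a hp0
    · intro a ha
      simp only [Finset.mem_filter, Finset.mem_range] at ha
      rw [Nat.mul_div_cancel' ha.2]
  have hint : (6:ℤ) * ∑ j ∈ Finset.range (p^d), ((p*j : ℕ):ℤ)^2
      = ((p^(d+1) : ℕ) : ℤ) * ((p:ℤ) * (2*((p:ℤ)^d)^2 - 3*(p:ℤ)^d + 1)) := by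
    have h := sq_sum_range (p^d)
    push_cast at h ⊢
    simp only [mul_pow]
    rw [← Finset.mul_sum]
    linear_combination (p:ℤ)^2 * h
  have step : 6 * ∑ j ∈ Finset.range (p^d), (((p*j : ℕ)) : ZMod n)^2
      = (((6:ℤ) * ∑ j ∈ Finset.range (p^d), ((p*j : ℕ):ℤ)^2 : ℤ) : ZMod n) := by
    push_cast
    ring
  rw [hswap, step, hint]
  push_cast
  rw [p_pow_zero]
  ring

include hp h3 in
lemma sum_sq_nondvd :
    ∑ k ∈ Finset.range n, (if p ∣ k then 0 else ((k : ZMod n))^2) = 0 := by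
  have hsplit := Finset.sum_filter_add_sum_filter_not (Finset.range n)
    (fun k => p ∣ k) (fun k => ((k : ZMod n))^2)
  have h1 : ∑ k ∈ (Finset.range n).filter (fun k => ¬ p ∣ k), ((k : ZMod n))^2
      = ∑ k ∈ Finset.range n, (if p ∣ k then 0 else ((k : ZMod n))^2) := by
    rw [Finset.sum_filter]
    apply Finset.sum_congr rfl
    intro x _
    rw [ite_not]
  apply (six_unit p d hp h3).mul_left_cancel
  rw [mul_zero, ← h1]
  have hsub : ∑ k ∈ (Finset.range n).filter (fun k => ¬ p ∣ k), ((k : ZMod n))^2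
      = ∑ k ∈ Finset.range n, ((k : ZMod n))^2
        - ∑ k ∈ (Finset.range n).filter (fun k => p ∣ k), ((k : ZMod n))^2 := by
    rw [← hsplit]; ring
  rw [hsub, mul_sub, sum_sq_all p d, sum_sq_mult p d hp, sub_zero]

include hp h3 in
lemma sum_over_units (g : ZMod n → ZMod n) :
    ∑ k ∈ (Finset.range n).filter (fun k => ¬ p ∣ k), g (k : ZMod n)
      = ∑ u : (ZMod n)ˣ, g u := by
  apply Finset.sum_nbij'
    (fun k => if h : IsUnit ((k : ℕ) : ZMod n) then h.unit else 1)
    (fun u => ((u : ZMod n)).val)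
  · intro a _
    exact Finset.mem_univ _
  · intro u _
    simp only [Finset.mem_filter, Finset.mem_range]
    constructor
    · exact ZMod.val_lt _
    · intro hdvd
      have hcop := ZMod.val_coe_unit_coprime u
      have hgcd : p ∣ Nat.gcd ((u : ZMod n)).val (p^(d+1)) :=
        Nat.dvd_gcd hdvd (dvd_pow_self p (Nat.succ_ne_zero d))
      rw [hcop] at hgcd
      have := Nat.le_of_dvd one_pos hgcd
      have := hp.one_lt
      omega
  · intro a ha
    simp only [Finset.mem_filter, Finset.mem_range] at ha
    have hu : IsUnit ((a : ℕ) : ZMod n) := (isUnit_cast_iff p d hp a).mpr ha.2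
    rw [dif_pos hu]
    have heq : ((hu.unit : (ZMod n)ˣ) : ZMod n) = ((a : ℕ) : ZMod n) := hu.unit_spec
    rw [heq, ZMod.val_cast_of_lt ha.1]
  · intro u _
    have hu : IsUnit (((((u : ZMod n)).val : ℕ)) : ZMod n) := by
      rw [ZMod.natCast_rightInverse _]
      exact u.isUnit
    rw [dif_pos hu]
    apply Units.ext
    rw [hu.unit_spec, ZMod.natCast_rightInverse _]
  · intro a ha
    simp only [Finset.mem_filter, Finset.mem_range] at ha
    have hu : IsUnit ((a : ℕ) : ZMod n) := (isUnit_cast_iff p d hp a).mpr ha.2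
    rw [dif_pos hu, hu.unit_spec]

include hp h3 in
lemma sum_inv_sq_nondvd :
    ∑ k ∈ Finset.range n, (if p ∣ k then 0 else (((k : ZMod n))^2)⁻¹) = 0 := by
  have h1 : ∑ k ∈ Finset.range n, (if p ∣ k then 0 else (((k : ZMod n))^2)⁻¹)
      = ∑ k ∈ (Finset.range n).filter (fun k => ¬ p ∣ k), (((k : ZMod n))^2)⁻¹ := by
    rw [Finset.sum_filter]
    apply Finset.sum_congr rfl
    intro x _
    rw [ite_not]
  have h2 := sum_over_units p d hp h3 (fun x => (x^2)⁻¹)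
  have h3' := sum_over_units p d hp h3 (fun x => x^2)
  have step1 : ∀ u : (ZMod n)ˣ, (((u : ZMod n))^2)⁻¹ = (((u^2)⁻¹ : (ZMod n)ˣ) : ZMod n) := by
    intro u
    rw [← Units.val_pow_eq_pow_val, ZMod.inv_coe_unit]
  have hinv : ∑ u : (ZMod n)ˣ, (((u : ZMod n))^2)⁻¹ = ∑ u : (ZMod n)ˣ, ((u : ZMod n))^2 := by
    rw [Finset.sum_congr rfl (fun u _ => step1 u)]
    refine Finset.sum_equiv (Equiv.inv (ZMod n)ˣ) (by simp) ?_
    intro u _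
    simp only [Equiv.inv_apply]
    rw [← inv_pow, Units.val_pow_eq_pow_val]
  have h4 : ∑ k ∈ (Finset.range n).filter (fun k => ¬ p ∣ k), ((k : ZMod n))^2
      = ∑ k ∈ Finset.range n, (if p ∣ k then 0 else ((k : ZMod n))^2) := by
    rw [Finset.sum_filter]
    apply Finset.sum_congr rfl
    intro x _
    rw [ite_not]
  rw [h1, h2, hinv, ← h3', h4]
  exact sum_sq_nondvd p d hp h3

end Core
end Jacobsthal2
namespace Jacobsthal3
open Jacobsthal Jacobsthal2

lemma prod_add_expansion (t : Finset ℕ) (q : ℕ → ℤ) (w : ℤ) :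
    ∃ r : ℤ, ∏ k ∈ t, (q k + w)
      = ∏ k ∈ t, q k + w * (∑ k ∈ t, ∏ k' ∈ t.erase k, q k') + w^2 * r := by
  classical
  induction t using Finset.induction_on with
  | empty => exact ⟨0, by simp⟩
  | @insert a s ha ih =>
    obtain ⟨r, hr⟩ := ih
    refine ⟨q a * r + (∑ k ∈ s, ∏ k' ∈ s.erase k, q k') + w * r, ?_⟩
    have hE' : ∑ k ∈ insert a s, ∏ k' ∈ (insert a s).erase k, q k'
        = (∏ k' ∈ s, q k') + q a * ∑ k ∈ s, ∏ k' ∈ s.erase k, q k' := by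
      rw [Finset.sum_insert ha, Finset.erase_insert ha, Finset.mul_sum]
      congr 1
      apply Finset.sum_congr rfl
      intro k hk
      have hka : k ≠ a := fun h => ha (h ▸ hk)
      rw [Finset.erase_insert_of_ne (Ne.symm hka),
        Finset.prod_insert (fun h => ha (Finset.mem_of_mem_erase h))]
    rw [Finset.prod_insert ha, Finset.prod_insert ha, hr, hE']
    ring

section Main
variable (p : ℕ)

lemma E_div (hp : p.Prime) (h3 : 3 < p) (m : ℕ) :
    (p:ℤ)^(padicValNat p m + 1) ∣
      ∑ k ∈ H p m, ∏ k' ∈ (H p m).erase k, ((k' * (m*p - k') : ℕ) : ℤ) := by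
  set μ := padicValNat p m with hμ
  set e := μ + 1 with he
  haveI : NeZero (p^e) := ⟨pow_ne_zero _ hp.pos.ne'⟩
  have hpe : (p:ℤ)^e = ((p^e : ℕ) : ℤ) := by push_cast; ring
  rw [hpe, ← ZMod.intCast_zmod_eq_zero_iff_dvd]
  push_cast
  -- key cast facts
  have hmp0 : ((m*p : ℕ) : ZMod (p^e)) = 0 := by
    rw [ZMod.natCast_eq_zero_iff]
    have h1 : p^μ ∣ m := pow_padicValNat_dvd
    calc p^e = p^μ * p := by rw [he]; ring
      _ ∣ m * p := mul_dvd_mul h1 dvd_rfl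
  have hcast : ∀ k' ∈ H p m,
      ((k' : ZMod (p^e)) * ((m*p - k' : ℕ) : ZMod (p^e))) = -((k' : ZMod (p^e))^2) := by
    intro k' hk'
    rw [mem_H] at hk'
    rw [Nat.cast_sub (by omega), hmp0]
    ring
  -- the half-range inverse-square sum is zero
  have hS2 : ∑ k ∈ H p m, (((k : ZMod (p^e)))^2)⁻¹ = 0 := by
    have hpair := sum_pairing p hp h3 m (f := fun k => (((k : ZMod (p^e)))^2)⁻¹)
    have hgsym : ∀ k ∈ H p m,
        ((((m*p - k : ℕ) : ZMod (p^e)))^2)⁻¹ = (((k : ZMod (p^e)))^2)⁻¹ := by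
      intro k hk
      rw [mem_H] at hk
      rw [Nat.cast_sub (by omega), hmp0]
      congr 1
      ring
    have h2S2 : ∑ k ∈ S p m, (((k : ZMod (p^e)))^2)⁻¹
        = 2 * ∑ k ∈ H p m, (((k : ZMod (p^e)))^2)⁻¹ := by
      rw [hpair, Finset.mul_sum]
      apply Finset.sum_congr rfl
      intro k hk
      rw [hgsym k hk]
      ring
    have hSzero : ∑ k ∈ S p m, (((k : ZMod (p^e)))^2)⁻¹ = 0 := by
      have hSeq : S p m = (Finset.range (m*p)).filter (fun k => ¬ p ∣ k) := by
        ext k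
        rw [mem_S, Finset.mem_filter, Finset.mem_range]
        constructor
        · rintro ⟨h1, h2, h3'⟩
          refine ⟨?_, h3'⟩
          rcases Nat.lt_or_ge k (m*p) with h | h
          · exact h
          · exfalso; exact h3' (by
              have : k = m*p := by omega
              rw [this]; exact Dvd.intro_left m rfl)
        · rintro ⟨h1, h2⟩
          refine ⟨?_, by omega, h2⟩
          rcases Nat.eq_zero_or_pos k with rfl | h
          · exact absurd (dvd_zero p) h2
          · exact h
      have hm' : m*p = (m / p^μ) * p^e := by
        have h1 : p^μ ∣ m := pow_padicValNat_dvd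
        rw [he, pow_succ, ← mul_assoc, Nat.div_mul_cancel h1]
      have hper : ∀ k, (fun k => if p ∣ k then 0 else (((k : ZMod (p^e)))^2)⁻¹) (k + p^e)
          = (fun k => if p ∣ k then 0 else (((k : ZMod (p^e)))^2)⁻¹) k := by
        intro k
        have hd : p ∣ p^e := dvd_pow_self p (Nat.succ_ne_zero μ)
        have hiff : p ∣ k + p^e ↔ p ∣ k := by
          constructor
          · intro h; have := Nat.dvd_sub h hd; simpa using this
          · intro h; exact Nat.dvd_add h hd
        have hcast2 : ((k + p^e : ℕ) : ZMod (p^e)) = (k : ZMod (p^e)) := by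
          rw [Nat.cast_add, ZMod.natCast_self, add_zero]
        show (if p ∣ k + p^e then 0 else (((k + p^e : ℕ) : ZMod (p^e))^2)⁻¹)
            = (if p ∣ k then 0 else (((k : ZMod (p^e)))^2)⁻¹)
        rw [hcast2, if_congr hiff rfl rfl]
      calc ∑ k ∈ S p m, (((k : ZMod (p^e)))^2)⁻¹
          = ∑ k ∈ (Finset.range (m*p)).filter (fun k => ¬ p ∣ k),
              (((k : ZMod (p^e)))^2)⁻¹ := by rw [hSeq]
        _ = ∑ k ∈ Finset.range (m*p), (if p ∣ k then 0 else (((k : ZMod (p^e)))^2)⁻¹) := by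
            rw [Finset.sum_filter]
            exact Finset.sum_congr rfl (fun x _ => ite_not _ _ _)
        _ = ∑ k ∈ Finset.range ((m / p^μ) * p^e),
              (if p ∣ k then 0 else (((k : ZMod (p^e)))^2)⁻¹) := by rw [← hm']
        _ = (m / p^μ) • ∑ k ∈ Finset.range (p^e),
              (if p ∣ k then 0 else (((k : ZMod (p^e)))^2)⁻¹) :=
            sum_periodic _ _ hper _
        _ = (m / p^μ) • (0 : ZMod (p^e)) := by rw [sum_inv_sq_nondvd p μ hp h3]
        _ = 0 := smul_zero _
    have := (two_unit p μ hp h3).mul_left_cancel (a := 2)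
      (by rw [← h2S2, hSzero, mul_zero] :
        2 * ∑ k ∈ H p m, (((k : ZMod (p^e)))^2)⁻¹ = 2 * 0)
    exact this
  -- rewrite the sum and conclude
  have hrw : ∀ k ∈ H p m, ∏ k' ∈ (H p m).erase k,
      ((k' : ZMod (p^e)) * ((m*p - k' : ℕ) : ZMod (p^e)))
      = (-1)^((H p m).card - 1) *
        ((∏ k' ∈ H p m, ((k' : ZMod (p^e)))^2) * ((((k : ZMod (p^e)))^2)⁻¹)) := by
    intro k hk
    have step1 : ∏ k' ∈ (H p m).erase k,
        ((k' : ZMod (p^e)) * ((m*p - k' : ℕ) : ZMod (p^e)))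
        = ∏ k' ∈ (H p m).erase k, (-(((k' : ZMod (p^e)))^2)) := by
      apply Finset.prod_congr rfl
      intro k' hk'
      exact hcast k' (Finset.mem_of_mem_erase hk')
    have step2 : ∏ k' ∈ (H p m).erase k, (-(((k' : ZMod (p^e)))^2))
        = (-1)^((H p m).card - 1) * ∏ k' ∈ (H p m).erase k, (((k' : ZMod (p^e)))^2) := by
      calc ∏ k' ∈ (H p m).erase k, (-(((k' : ZMod (p^e)))^2))
          = ∏ k' ∈ (H p m).erase k, ((-1) * (((k' : ZMod (p^e)))^2)) :=
            Finset.prod_congr rfl (fun k' _ => by ring)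
        _ = (-1)^((H p m).card - 1) * ∏ k' ∈ (H p m).erase k, (((k' : ZMod (p^e)))^2) := by
            rw [Finset.prod_mul_distrib, Finset.prod_const, Finset.card_erase_of_mem hk]
    have hku : IsUnit (((k : ZMod (p^e)))^2) := by
      have hkd : ¬ p ∣ k := ((mem_H p).mp hk).2.2.1
      exact ((isUnit_cast_iff p μ hp k).mpr hkd).pow 2
    have step3 : ∏ k' ∈ (H p m).erase k, (((k' : ZMod (p^e)))^2)
        = (∏ k' ∈ H p m, ((k' : ZMod (p^e)))^2) * ((((k : ZMod (p^e)))^2)⁻¹) := by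
      have hpe2 := Finset.prod_erase_mul (H p m) (fun k' => (((k' : ZMod (p^e)))^2)) hk
      calc ∏ k' ∈ (H p m).erase k, (((k' : ZMod (p^e)))^2)
          = (∏ k' ∈ (H p m).erase k, (((k' : ZMod (p^e)))^2)) *
              ((((k : ZMod (p^e)))^2) * ((((k : ZMod (p^e)))^2)⁻¹)) := by
            rw [ZMod.mul_inv_of_unit _ hku, mul_one]
        _ = ((∏ k' ∈ (H p m).erase k, (((k' : ZMod (p^e)))^2)) *
              (((k : ZMod (p^e)))^2)) * ((((k : ZMod (p^e)))^2)⁻¹) := by ring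
        _ = (∏ k' ∈ H p m, ((k' : ZMod (p^e)))^2) * ((((k : ZMod (p^e)))^2)⁻¹) := by
            rw [hpe2]
    rw [step1, step2, step3]
  rw [Finset.sum_congr rfl hrw, ← Finset.mul_sum, ← Finset.mul_sum, hS2]
  ring

theorem core (hp : p.Prime) (h3 : 3 < p) (m s : ℕ) (hm : 0 < m) (hs : 0 < s)
    (hv : padicValNat p m ≤ padicValNat p s) :
    (p:ℤ)^(3 + padicValNat p m + padicValNat p s + padicValNat p (m+s)) ∣
      (((m+s)*p).choose (m*p) : ℤ) - ((m+s).choose m : ℤ) := by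
  have hp0 : 0 < p := hp.pos
  set μ := padicValNat p m
  set σ := padicValNat p s
  set α := padicValNat p (m+s)
  set N := 3 + μ + σ + α with hN
  -- (1) the exact product identity  C * P m = A * Π  over ℤ
  have hsub : (m+s)*p - m*p = s*p := by rw [add_mul]; omega
  have big := Nat.choose_mul_factorial_mul_factorial
    (Nat.mul_le_mul_right p (Nat.le_add_right m s))
  rw [hsub] at big
  have hA := Nat.choose_mul_factorial_mul_factorial (Nat.le_add_right m s)
  rw [Nat.add_sub_cancel_left] at hA
  rw [factorial_eq p hp0 m, factorial_eq p hp0 s, factorial_eq p hp0 (m+s),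
    P_shift p m s, ← hA] at big
  have bigZ := congrArg (Nat.cast : ℕ → ℤ) big
  push_cast at bigZ
  have hPpos : ∀ t : ℕ, 0 < P p t := by
    intro t
    apply Finset.prod_pos
    intro k hk
    exact ((mem_S p).mp hk).1
  have hfacpos : ∀ t : ℕ, 0 < t.factorial := fun t => t.factorial_pos
  have hbridge : ((∏ k ∈ S p m, (k + s*p) : ℕ) : ℤ)
      = ∏ x ∈ S p m, ((x:ℤ) + (s:ℤ)*(p:ℤ)) := by
    push_cast
    ring
  have hcancel : (((m+s)*p).choose (m*p) : ℤ) * (P p m : ℕ)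
      = ((m+s).choose m : ℤ) * ((∏ k ∈ S p m, (k + s*p) : ℕ) : ℤ) := by
    have hne : ((p:ℤ)^m * (p:ℤ)^s * (m.factorial : ℤ) * (s.factorial : ℤ) * (P p s : ℕ)) ≠ 0 := by
      have h1 : (0:ℤ) < (p:ℤ)^m := by positivity
      have h2 : (0:ℤ) < (p:ℤ)^s := by positivity
      have h3 : (0:ℤ) < (m.factorial : ℤ) := Int.natCast_pos.mpr (hfacpos m)
      have h4 : (0:ℤ) < (s.factorial : ℤ) := Int.natCast_pos.mpr (hfacpos s)
      have h5 : (0:ℤ) < ((P p s : ℕ) : ℤ) := Int.natCast_pos.mpr (hPpos s)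
      positivity
    apply mul_left_cancel₀ hne
    rw [hbridge]
    linear_combination bigZ
  -- (2) pairing forms
  have hPm : P p m = ∏ k ∈ H p m, (k * (m*p - k)) := by
    unfold P
    exact prod_pairing p hp h3 m (f := fun k => k)
  have hPi : (∏ k ∈ S p m, (k + s*p)) = ∏ k ∈ H p m, (k*(m*p - k) + (m+s)*s*p^2) := by
    rw [prod_pairing p hp h3 m (f := fun k => k + s*p)]
    apply Finset.prod_congr rfl
    intro k hk
    rw [mem_H] at hk
    have hkj : k + (m*p - k) = m*p := by omega
    calc (k + s*p) * ((m*p - k) + s*p)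
        = k*(m*p - k) + s*p*(k+(m*p - k)) + s*p*(s*p) := by ring
      _ = k*(m*p - k) + (m+s)*s*p^2 := by rw [hkj]; ring
  -- (3) expansion over ℤ
  obtain ⟨r, hr⟩ := prod_add_expansion (H p m)
    (fun k => ((k * (m*p - k) : ℕ) : ℤ)) (((m+s)*s*p^2 : ℕ) : ℤ)
  have hPiZ : ((∏ k ∈ S p m, (k + s*p) : ℕ) : ℤ)
      = ∏ k ∈ H p m, (((k * (m*p - k) : ℕ) : ℤ) + (((m+s)*s*p^2 : ℕ) : ℤ)) := by
    rw [hPi, Nat.cast_prod]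
    apply Finset.prod_congr rfl
    intro k _
    push_cast
    ring
  have hPmZ : ((P p m : ℕ) : ℤ) = ∏ k ∈ H p m, ((k * (m*p - k) : ℕ) : ℤ) := by
    rw [hPm, Nat.cast_prod]
  -- (4) divisibilities
  have hwdvd : (p:ℤ)^(2 + α + σ) ∣ (((m+s)*s*p^2 : ℕ) : ℤ) := by
    have h1 : p^α ∣ (m+s) := pow_padicValNat_dvd
    have h2 : p^σ ∣ s := pow_padicValNat_dvd
    have h3' : p^α * p^σ * p^2 ∣ (m+s)*s*p^2 :=
      mul_dvd_mul (mul_dvd_mul h1 h2) dvd_rfl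
    have h4 : ((p^α * p^σ * p^2 : ℕ) : ℤ) ∣ (((m+s)*s*p^2 : ℕ) : ℤ) :=
      Int.natCast_dvd_natCast.mpr h3'
    have h5 : (p:ℤ)^(2+α+σ) = ((p^α * p^σ * p^2 : ℕ) : ℤ) := by push_cast; ring
    rw [h5]
    exact h4
  have hE := E_div p hp h3 m
  have hwE : (p:ℤ)^N ∣ (((m+s)*s*p^2 : ℕ) : ℤ) *
      (∑ k ∈ H p m, ∏ k' ∈ (H p m).erase k, ((k' * (m*p - k') : ℕ) : ℤ)) := by
    have hsplit : (p:ℤ)^N = (p:ℤ)^(2+α+σ) * (p:ℤ)^(μ+1) := by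
      rw [← pow_add]
      congr 1
      omega
    rw [hsplit]
    exact mul_dvd_mul hwdvd hE
  have hw2 : (p:ℤ)^N ∣ (((m+s)*s*p^2 : ℕ) : ℤ)^2 * r := by
    apply dvd_mul_of_dvd_left
    have h1 : ((p:ℤ)^(2+α+σ))^2 ∣ (((m+s)*s*p^2 : ℕ) : ℤ)^2 := pow_dvd_pow_of_dvd hwdvd 2
    have h2 : (p:ℤ)^N ∣ ((p:ℤ)^(2+α+σ))^2 := by
      rw [← pow_mul]
      apply pow_dvd_pow
      omega
    exact h2.trans h1
  have hdiff : (p:ℤ)^N ∣ ((∏ k ∈ S p m, (k + s*p) : ℕ) : ℤ) - ((P p m : ℕ) : ℤ) := by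
    rw [hPiZ, hPmZ, hr]
    have : (∏ k ∈ H p m, ((k * (m*p - k) : ℕ) : ℤ))
        + (((m+s)*s*p^2 : ℕ) : ℤ) * (∑ k ∈ H p m, ∏ k' ∈ (H p m).erase k,
            ((k' * (m*p - k') : ℕ) : ℤ))
        + (((m+s)*s*p^2 : ℕ) : ℤ)^2 * r
        - (∏ k ∈ H p m, ((k * (m*p - k) : ℕ) : ℤ))
        = (((m+s)*s*p^2 : ℕ) : ℤ) * (∑ k ∈ H p m, ∏ k' ∈ (H p m).erase k,
            ((k' * (m*p - k') : ℕ) : ℤ))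
          + (((m+s)*s*p^2 : ℕ) : ℤ)^2 * r := by ring
    rw [this]
    exact dvd_add hwE hw2
  -- (5) conclude
  have hfinal : (p:ℤ)^N ∣ ((((m+s)*p).choose (m*p) : ℤ) - ((m+s).choose m : ℤ))
      * ((P p m : ℕ) : ℤ) := by
    have heq : ((((m+s)*p).choose (m*p) : ℤ) - ((m+s).choose m : ℤ)) * ((P p m : ℕ) : ℤ)
        = ((m+s).choose m : ℤ) *
          (((∏ k ∈ S p m, (k + s*p) : ℕ) : ℤ) - ((P p m : ℕ) : ℤ)) := by
      linear_combination hcancel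
    rw [heq]
    exact hdiff.mul_left _
  have hnd : ¬ p ∣ P p m := by
    intro hdvd
    obtain ⟨a, haS, hpa⟩ := (Prime.dvd_finset_prod_iff hp.prime _).mp hdvd
    exact ((mem_S p).mp haS).2.2 hpa
  have hcop : Nat.Coprime (p^N) (P p m) :=
    Nat.Coprime.pow_left N (hp.coprime_iff_not_dvd.mpr hnd)
  have hcopZ : IsCoprime ((p:ℤ)^N) ((P p m : ℕ) : ℤ) := by
    have := Nat.isCoprime_iff_coprime.mpr hcop
    push_cast at this
    exact this
  exact hcopZ.dvd_of_dvd_mul_right hfinal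

end Main
end Jacobsthal3

theorem jacobsthal (a b p : ℕ) (hb : 0 < b) (hab : b < a) (hp : p.Prime) (h : 3 < p) :
    (p : ℤ)^(3 + padicValNat p (a * b * (a - b))) ∣
      (Nat.choose (a*p) (b*p) : ℤ) - (Nat.choose a b : ℤ) := by
  haveI := Fact.mk hp
  set c := a - b with hcdef
  have hbc : b + c = a := by omega
  have hc : 0 < c := by omega
  have hval : padicValNat p (a*b*c)
      = padicValNat p a + padicValNat p b + padicValNat p c := by
    rw [padicValNat.mul (Nat.mul_ne_zero (by omega) (by omega)) (by omega),
      padicValNat.mul (by omega) (by omega)]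
  by_cases hord : padicValNat p b ≤ padicValNat p c
  · have h1 := Jacobsthal3.core p hp h b c hb hc hord
    rw [hbc] at h1
    have hexp : 3 + padicValNat p (a*b*c)
        = 3 + padicValNat p b + padicValNat p c + padicValNat p a := by
      rw [hval]; omega
    rw [hexp]
    exact h1
  · have h1 := Jacobsthal3.core p hp h c b hc hb (le_of_not_ge hord)
    rw [show c + b = a by omega] at h1
    have hch1 : (a*p).choose (c*p) = (a*p).choose (b*p) := by
      have hcp : c*p = a*p - b*p := by rw [← Nat.sub_mul]
      rw [hcp, Nat.choose_symm (Nat.mul_le_mul_right p hab.le)]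
    have hch2 : a.choose c = a.choose b := Nat.choose_symm hab.le
    rw [hch1, hch2] at h1
    have hexp : 3 + padicValNat p (a*b*c)
        = 3 + padicValNat p c + padicValNat p b + padicValNat p a := by
      rw [hval]; omega
    rw [hexp]
    exact h1
end

section
/- For all integers a ≥ b ≥ 0 and every prime p, C(a*p, b*p) = C(a, b) * B_p(a*p, b*p), where B_p denotes the modified binomial coefficient built from modified factorials a!_p = ∏_{1 ≤ k ≤ a, p ∤ k} k. -/
/-- The modified factorial `a!_p`: the product of all `k` with `1 ≤ k ≤ a` and `p ∤ k`. -/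
def modFact (p a : ℕ) : ℕ := ((Finset.Icc 1 a).filter (fun k => ¬ p ∣ k)).prod id

lemma prod_Icc_fact (n : ℕ) : (∏ i ∈ Finset.Icc 1 n, i) = n.factorial := by
  rw [← Finset.Ico_add_one_right_eq_Icc]
  exact Finset.prod_Ico_id_eq_factorial n

lemma modFact_pos (p a : ℕ) : 0 < modFact p a := by
  apply Finset.prod_pos
  intro i hi
  simp only [Finset.mem_filter, Finset.mem_Icc] at hi
  exact hi.1.1

lemma fact_mul_eq (p n : ℕ) (hp : 0 < p) :
    (n*p).factorial = p^n * n.factorial * modFact p (n*p) := by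
  rw [← prod_Icc_fact (n*p),
    ← Finset.prod_filter_mul_prod_filter_not (Finset.Icc 1 (n*p)) (fun k => p ∣ k)]
  unfold modFact
  congr 1
  have himg : (Finset.Icc 1 (n*p)).filter (fun k => p ∣ k)
      = (Finset.Icc 1 n).image (fun j => p * j) := by
    ext k
    simp only [Finset.mem_filter, Finset.mem_image, Finset.mem_Icc]
    constructor
    · rintro ⟨⟨h1k, h2k⟩, j, rfl⟩
      have hj1 : 0 < j := by
        rcases Nat.eq_zero_or_pos j with rfl | h
        · simp at h1k
        · exact h
      have hj2 : j ≤ n := Nat.le_of_mul_le_mul_left (by rw [mul_comm n p] at h2k; exact h2k) hp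
      exact ⟨j, ⟨hj1, hj2⟩, rfl⟩
    · rintro ⟨j, ⟨hj1, hj2⟩, rfl⟩
      exact ⟨⟨Nat.one_le_iff_ne_zero.mpr (by positivity), by rw [mul_comm n p]; exact Nat.mul_le_mul_left p hj2⟩, j, rfl⟩
  rw [himg, Finset.prod_image (fun x _ y _ h => Nat.eq_of_mul_eq_mul_left hp h),
    Finset.prod_mul_distrib, Finset.prod_const, Nat.card_Icc]
  simp [prod_Icc_fact]

theorem choose_mul_eq_choose_mul_modified (p a b : ℕ) (hp : p.Prime) (hab : b ≤ a) :
    (Nat.choose (a*p) (b*p) : ℚ) =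
      (Nat.choose a b : ℚ) *
        ((modFact p (a*p) : ℚ) / ((modFact p (b*p) : ℚ) * (modFact p (a*p - b*p) : ℚ))) := by
  have hp0 : 0 < p := hp.pos
  have habp : b*p ≤ a*p := Nat.mul_le_mul_right p hab
  have hsub : a*p - b*p = (a-b)*p := by rw [Nat.sub_mul]
  have h1 := Nat.cast_choose ℚ habp
  have h2 := Nat.cast_choose ℚ hab
  rw [h1, h2, hsub]
  have e1 : ((a*p).factorial : ℚ) = (p:ℚ)^a * a.factorial * modFact p (a*p) := by
    exact_mod_cast congrArg (Nat.cast : ℕ → ℚ) (fact_mul_eq p a hp0)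
  have e2 : ((b*p).factorial : ℚ) = (p:ℚ)^b * b.factorial * modFact p (b*p) := by
    exact_mod_cast congrArg (Nat.cast : ℕ → ℚ) (fact_mul_eq p b hp0)
  have e3 : (((a-b)*p).factorial : ℚ) = (p:ℚ)^(a-b) * (a-b).factorial * modFact p ((a-b)*p) := by
    exact_mod_cast congrArg (Nat.cast : ℕ → ℚ) (fact_mul_eq p (a-b) hp0)
  rw [e1, e2, e3]
  have hpow : (p:ℚ)^a = (p:ℚ)^b * (p:ℚ)^(a-b) := by
    rw [← pow_add]; congr 1; omega
  have nz : ∀ n : ℕ, ((modFact p n : ℚ)) ≠ 0 := fun n => by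
    exact_mod_cast (modFact_pos p n).ne'
  have fnz : ∀ n : ℕ, ((n.factorial : ℚ)) ≠ 0 := fun n => by
    exact_mod_cast n.factorial_ne_zero
  have pnz : (p:ℚ) ≠ 0 := by exact_mod_cast hp0.ne'
  rw [hpow, div_mul_div_comm, div_eq_div_iff
    (by apply_rules [mul_ne_zero, pow_ne_zero, nz, fnz, pnz])
    (by apply_rules [mul_ne_zero, pow_ne_zero, nz, fnz, pnz])]
  ring
end

section
/- For all integers n ≥ 1 and 0 ≤ j ≤ n, C(2n+1, j) * (2(n-j)+1) / (2n+1) = C(2n-1, j) - C(2n-1, j-2), where C(m, k) = 0 for k < 0. -/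
theorem stmt12 (n j : ℕ) (hn : 1 ≤ n) (hj : j ≤ n) :
    ((Nat.choose (2*n+1) j : ℚ) * (2*(n-j)+1)) / (2*n+1) =
      (Nat.choose (2*n-1) j : ℚ) - (if j < 2 then 0 else (Nat.choose (2*n-1) (j-2) : ℚ)) := by
  have hpos : (2*(n:ℚ)+1) ≠ 0 := by positivity
  rcases Nat.lt_or_ge j 2 with hlt | hge
  · interval_cases j
    · simp [Nat.choose]
      field_simp
      exact hpos
    · -- j = 1
      rw [if_pos (by omega)]
      rw [Nat.choose_one_right, Nat.choose_one_right]
      have h1 : ((2*n-1 : ℕ) : ℚ) = 2*n - 1 := by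
        push_cast [Nat.cast_sub (show 1 ≤ 2*n by omega)]; ring
      rw [h1]
      push_cast
      field_simp
      ring
  · rw [if_neg (by omega)]
    have h1 : j - 1 + 1 = j := by omega
    have h2' : j - 2 + 1 = j - 1 := by omega
    have hm : 2*n - 1 + 1 = 2*n := by omega
    have f1 : (2*n+1) * Nat.choose (2*n) j = Nat.choose (2*n+1) j * (2*n+1-j) := by
      have a := Nat.add_one_mul_choose_eq (2*n) j
      have b := Nat.choose_succ_right_eq (2*n+1) j
      rw [a, b]
    have f2 : (2*n+1) * Nat.choose (2*n) (j-1) = Nat.choose (2*n+1) j * j := by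
      have a := Nat.add_one_mul_choose_eq (2*n) (j-1)
      simp [Nat.succ_eq_add_one, h1] at a
      rw [a]
    have f3 : Nat.choose (2*n) j = Nat.choose (2*n-1) (j-1) + Nat.choose (2*n-1) j := by
      have := Nat.choose_succ_succ (2*n-1) (j-1)
      simp only [Nat.succ_eq_add_one, hm, h1] at this
      exact this
    have f4 : Nat.choose (2*n) (j-1) = Nat.choose (2*n-1) (j-2) + Nat.choose (2*n-1) (j-1) := by
      have := Nat.choose_succ_succ (2*n-1) (j-2)
      simp only [Nat.succ_eq_add_one, hm, h2'] at this
      exact this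
    have qf1 : (2*(n:ℚ)+1) * (Nat.choose (2*n) j : ℚ)
        = (Nat.choose (2*n+1) j : ℚ) * (2*n+1-j) := by
      have := congrArg (Nat.cast : ℕ → ℚ) f1
      push_cast [Nat.cast_sub (show j ≤ 2*n+1 by omega)] at this
      linarith
    have qf2 : (2*(n:ℚ)+1) * (Nat.choose (2*n) (j-1) : ℚ)
        = (Nat.choose (2*n+1) j : ℚ) * j := by
      have := congrArg (Nat.cast : ℕ → ℚ) f2
      push_cast at this
      linarith
    have qf3 : (Nat.choose (2*n) j : ℚ)
        = (Nat.choose (2*n-1) (j-1) : ℚ) + (Nat.choose (2*n-1) j : ℚ) := by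
      exact_mod_cast congrArg (Nat.cast : ℕ → ℚ) f3
    have qf4 : (Nat.choose (2*n) (j-1) : ℚ)
        = (Nat.choose (2*n-1) (j-2) : ℚ) + (Nat.choose (2*n-1) (j-1) : ℚ) := by
      exact_mod_cast congrArg (Nat.cast : ℕ → ℚ) f4
    rw [div_eq_iff hpos]
    linear_combination qf2 - qf1 + (2*(n:ℚ)+1) * qf3 - (2*(n:ℚ)+1) * qf4
end

section
/- Let n ≥ 1 be an integer and p a prime with p > 2n+1. Then p^{2n+1} divides the sum over j from 0 to n of (-1)^j * (C(2n, j) - C(2n, j-1)) * C((n+1-j)*p, p) / (n+1-j). -/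
open Finset Polynomial


open Finset

theorem FD : ∀ (m : ℕ) (k : ℕ) (c : ℤ), k < m →
    ∑ j ∈ range (m+1), (-1:ℤ)^j * (Nat.choose m j : ℤ) * (c - j)^k = 0 := by
  intro m
  induction m with
  | zero => intro k c hk; omega
  | succ m ih =>
    intro k c hk
    have hrec : ∀ d : ℤ, ∑ j ∈ range (m+2), (-1:ℤ)^j * (Nat.choose (m+1) j : ℤ) * (d - j)^k
        = (∑ j ∈ range (m+1), (-1:ℤ)^j * (Nat.choose m j : ℤ) * (d - j)^k)
          - ∑ j ∈ range (m+1), (-1:ℤ)^j * (Nat.choose m j : ℤ) * ((d-1) - j)^k := by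
      intro d
      have hU : ∑ j ∈ range (m+1), (-1:ℤ)^j * (Nat.choose m (j+1) : ℤ) * ((d-1) - j)^k
          = d^k - ∑ j ∈ range (m+1), (-1:ℤ)^j * (Nat.choose m j : ℤ) * (d - j)^k := by
        have h2 : ∑ j ∈ range (m+2), (-1:ℤ)^j * (Nat.choose m j : ℤ) * (d - j)^k
            = (∑ j ∈ range (m+1), (-1:ℤ)^j * (Nat.choose m j : ℤ) * (d - j)^k) + 0 := by
          rw [Finset.sum_range_succ]
          simp [Nat.choose_succ_self]
        have h3 := Finset.sum_range_succ' (fun j => (-1:ℤ)^j * (Nat.choose m j : ℤ) * (d - j)^k) (m+1)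
        rw [h2] at h3
        have h4 : ∀ j ∈ range (m+1), (-1:ℤ)^(j+1) * (Nat.choose m (j+1) : ℤ) * (d - (j+1:ℕ))^k
            = -((-1:ℤ)^j * (Nat.choose m (j+1) : ℤ) * ((d-1) - j)^k) := by
          intro j hj; push_cast; ring
        rw [Finset.sum_congr rfl h4, Finset.sum_neg_distrib] at h3
        simp at h3
        linarith [h3]
      rw [Finset.sum_range_succ' (fun j => (-1:ℤ)^j * (Nat.choose (m+1) j : ℤ) * (d - j)^k)]
      have e1 : ∀ j ∈ range (m+1), (-1:ℤ)^(j+1) * (Nat.choose (m+1) (j+1) : ℤ) * (d - (j+1:ℕ))^k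
          = -((-1:ℤ)^j * (Nat.choose m j : ℤ) * ((d-1) - j)^k)
            - (-1:ℤ)^j * (Nat.choose m (j+1) : ℤ) * ((d-1) - j)^k := by
        intro j hj
        rw [Nat.choose_succ_succ]
        push_cast
        ring
      rw [Finset.sum_congr rfl e1, Finset.sum_sub_distrib, Finset.sum_neg_distrib, hU]
      simp [Nat.choose_zero_right]
      ring
    rw [hrec c]
    rcases Nat.eq_zero_or_pos k with hk0 | hkpos
    · subst hk0
      simp
    · rw [← Finset.sum_sub_distrib]
      have expand : ∀ j ∈ range (m+1),
          (-1:ℤ)^j * (Nat.choose m j : ℤ) * (c - j)^k - (-1:ℤ)^j * (Nat.choose m j : ℤ) * ((c-1) - j)^k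
          = ∑ t ∈ range k, (-((-1:ℤ)^(k-t) * (Nat.choose k t : ℤ))) * ((-1:ℤ)^j * (Nat.choose m j : ℤ) * (c - j)^t) := by
        intro j hj
        have hap : ((c-1) - (j:ℤ))^k
            = (∑ t ∈ range k, (c - j)^t * (-1:ℤ)^(k-t) * (Nat.choose k t : ℤ)) + (c - j)^k := by
          have h1 : ((c-1) - (j:ℤ)) = (c - j) + (-1) := by ring
          rw [h1, add_pow, Finset.sum_range_succ]
          simp
        rw [hap, mul_add, Finset.mul_sum]
        have h2 : ∀ (a x S : ℤ), a*x - (S + a*x) = -S := by intros; ring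
        rw [h2, ← Finset.sum_neg_distrib]
        apply Finset.sum_congr rfl
        intro t ht
        ring
      rw [Finset.sum_congr rfl expand, Finset.sum_comm]
      apply Finset.sum_eq_zero
      intro t ht
      have ht2 := Finset.mem_range.1 ht
      rw [← Finset.mul_sum, ih t c (by omega), mul_zero]

open Finset Polynomial

theorem prod_X_sub_C_univ (p : ℕ) [Fact p.Prime] (hp2 : 1 < p) :
    ∏ a : ZMod p, (X - C a) = X ^ p - X := by
  have hmonic : (X ^ p - X : (ZMod p)[X]).Monic := by
    apply Polynomial.monic_X_pow_sub
    rw [Polynomial.degree_X]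
    exact_mod_cast hp2
  have hdeg : (X ^ p - X : (ZMod p)[X]).natDegree = p :=
    FiniteField.X_pow_card_sub_X_natDegree_eq _ hp2
  have hroots : (X ^ p - X : (ZMod p)[X]).roots = Finset.univ.val := by
    have := FiniteField.roots_X_pow_card_sub_X (ZMod p)
    rwa [ZMod.card] at this
  have := Polynomial.prod_multiset_X_sub_C_of_monic_of_roots_card_eq hmonic
    (by rw [hroots, hdeg]; simpa using (ZMod.card p).symm)
  rw [hroots] at this
  rw [← this]
  rfl

theorem prod_X_sub_C_units (p : ℕ) [Fact p.Prime] (hp2 : 1 < p) :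
    ∏ i ∈ range (p-1), (X - C (((i+1 : ℕ) : ZMod p))) = X ^ (p-1) - 1 := by
  obtain ⟨m, rfl⟩ : ∃ m, p = m + 1 := ⟨p-1, by omega⟩
  simp only [Nat.add_sub_cancel]
  have key : ∏ i ∈ range (m+1), (X - C ((i : ℕ) : ZMod (m+1))) = X ^ (m+1) - X := by
    rw [← prod_X_sub_C_univ (m+1) hp2]
    apply Finset.prod_nbij (fun i => ((i : ℕ) : ZMod (m+1)))
    · intro i _; exact Finset.mem_univ _
    · intro i hi j hj hij
      have hi' : i < m + 1 := by simpa using hi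
      have hj' : j < m + 1 := by simpa using hj
      have h2 : ((i : ZMod (m+1))).val = ((j : ZMod (m+1))).val := congrArg ZMod.val hij
      rwa [ZMod.val_cast_of_lt hi', ZMod.val_cast_of_lt hj'] at h2
    · intro a _
      refine ⟨a.val, Finset.mem_coe.2 (Finset.mem_range.2 (ZMod.val_lt a)), ?_⟩
      simp [ZMod.natCast_val, ZMod.cast_id]
    · intro i _; rfl
  rw [Finset.prod_range_succ'] at key
  simp only [Nat.cast_zero, map_zero, sub_zero] at key
  have hX : (X : (ZMod (m+1))[X]) ≠ 0 := Polynomial.X_ne_zero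
  apply mul_right_cancel₀ hX
  rw [key]
  ring

theorem coeff_dvd (p : ℕ) (hp : p.Prime) (k : ℕ) (hk0 : 0 < k) (hk : k < p - 1) :
    (p:ℤ) ∣ (∏ i ∈ range (p-1), (X - C ((i:ℤ)+1))).coeff k := by
  haveI : Fact p.Prime := ⟨hp⟩
  rw [← ZMod.intCast_zmod_eq_zero_iff_dvd]
  have hmap : (((∏ i ∈ range (p-1), (X - C ((i:ℤ)+1))).coeff k : ℤ) : ZMod p)
      = ((∏ i ∈ range (p-1), (X - C ((i:ℤ)+1))).map (Int.castRingHom (ZMod p))).coeff k := by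
    rw [Polynomial.coeff_map]; rfl
  rw [hmap, Polynomial.map_prod]
  have : ∀ i ∈ range (p-1), ((X - C ((i:ℤ)+1)).map (Int.castRingHom (ZMod p)))
      = (X - C (((i+1:ℕ)) : ZMod p)) := by
    intro i _
    rw [Polynomial.map_sub, Polynomial.map_X, Polynomial.map_C]
    congr 1
    simp [map_add]
  rw [Finset.prod_congr rfl this, prod_X_sub_C_units p hp.one_lt]
  rw [Polynomial.coeff_sub, Polynomial.coeff_X_pow, Polynomial.coeff_one]
  rw [if_neg (by omega), if_neg (by omega)]
  ring


noncomputable section StmtAux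

def AA (n j : ℕ) : ℤ :=
  (-1)^j * ((Nat.choose (2*n) j : ℤ) - if j = 0 then 0 else (Nat.choose (2*n) (j-1) : ℤ))

def FF (p : ℕ) (m : ℤ) : ℤ := ∏ i ∈ range (p-1), (m * p - (i+1))

theorem AA_symm (n j : ℕ) (hj : j ≤ 2*n+1) : AA n (2*n+1-j) = AA n j := by
  have hpow : ((-1:ℤ))^(2*n+1) = -1 := Odd.neg_one_pow ⟨n, by ring⟩
  have hch0 : Nat.choose (2*n) (2*n+1) = 0 := Nat.choose_eq_zero_of_lt (by omega)
  have hA0 : AA n 0 = 1 := by simp [AA]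
  have hAtop : AA n (2*n+1) = 1 := by
    unfold AA
    rw [if_neg (by omega : ¬(2*n+1 = 0)), hch0, show 2*n+1-1 = 2*n by omega,
      Nat.choose_self, hpow]
    norm_num
  rcases Nat.eq_zero_or_pos j with rfl | hj1
  · rw [Nat.sub_zero, hAtop, hA0]
  · rcases Nat.eq_or_lt_of_le hj with rfl | hj2
    · rw [Nat.sub_self, hA0, hAtop]
    · -- 1 ≤ j ≤ 2n
      have hj3 : j ≤ 2*n := by omega
      simp only [AA]
      rw [if_neg (by omega), if_neg (by omega)]
      have e1 : Nat.choose (2*n) (2*n+1-j) = Nat.choose (2*n) (j-1) := by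
        rw [show 2*n+1-j = 2*n - (j-1) by omega]
        exact Nat.choose_symm (by omega)
      have e2 : Nat.choose (2*n) (2*n+1-j-1) = Nat.choose (2*n) j := by
        rw [show 2*n+1-j-1 = 2*n - j by omega]
        exact Nat.choose_symm (by omega)
      rw [e1, e2]
      have hsq : ((-1:ℤ)^j)*((-1:ℤ)^j) = 1 := by
        rw [← pow_add]; exact Even.neg_one_pow ⟨j, rfl⟩
      have h1 : (-1:ℤ)^(2*n+1-j) * (-1:ℤ)^j = -1 := by
        rw [← pow_add, show 2*n+1-j+j = 2*n+1 by omega]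
        exact Odd.neg_one_pow ⟨n, by ring⟩
      have hsign : (-1:ℤ)^(2*n+1-j) = -(-1:ℤ)^j := by
        linear_combination ((-1:ℤ)^j) * h1 - ((-1:ℤ)^(2*n+1-j)) * hsq
      rw [hsign]; ring

theorem FF_symm (p : ℕ) (hodd : Odd p) (m : ℤ) : FF p (1 - m) = FF p m := by
  unfold FF
  rw [← Finset.prod_range_reflect]
  have e : ∀ i ∈ range (p-1), ((1-m) * p - ((↑(p-1-1-i):ℤ)+1)) = -(m * p - (i+1)) := by
    intro i hi
    have hi' : i < p - 1 := Finset.mem_range.1 hi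
    have h2 : ((p-1-1-i : ℕ) : ℤ) = (p:ℤ) - 2 - i := by
      have : 1 ≤ p := hodd.pos
      omega
    rw [h2]; ring
  rw [Finset.prod_congr rfl e]
  have : ∀ i ∈ range (p-1), -(m * (p:ℤ) - (i+1)) = (-1) * (m * p - (i+1)) := by
    intro i _; ring
  rw [Finset.prod_congr rfl this, Finset.prod_mul_distrib, Finset.prod_const]
  have : ((-1:ℤ))^(range (p-1)).card = 1 := by
    rw [Finset.card_range]
    exact Even.neg_one_pow (Nat.Odd.sub_odd hodd odd_one)
  rw [this, one_mul]

end StmtAux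

theorem stmt13 (n p : ℕ) (hn : 1 ≤ n) (hp : p.Prime) (h : 2*n + 1 < p) :
    ∃ k : ℤ,
      (∑ j ∈ Finset.range (n+1), (-1 : ℚ)^j *
          ((Nat.choose (2*n) j : ℚ) - (if j = 0 then 0 else (Nat.choose (2*n) (j-1) : ℚ))) *
          (Nat.choose ((n+1-j)*p) p : ℚ) / ((n : ℚ) + 1 - j))
        = (p : ℚ)^(2*n+1) * (k : ℚ) := by
  have hp2 : 2 < p := by omega
  have hodd : Odd p := hp.odd_of_ne_two (by omega)
  -- the half sum over integers
  set Sint : ℤ := ∑ j ∈ range (n+1), AA n j * (Nat.choose ((n+1-j)*p - 1) (p-1) : ℤ) with hSint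
  -- the full symmetric sum
  set G : ℤ := ∑ j ∈ range (2*n+2), AA n j * FF p ((n:ℤ)+1-j) with hG
  -- Step: FF at positive integer values vs descFactorial / choose
  have hFFval : ∀ m : ℕ, 1 ≤ m → FF p (m:ℤ) = ((p-1).factorial : ℤ) * (Nat.choose (m*p - 1) (p-1) : ℤ) := by
    intro m hm
    have h1 : (m*p - 1).descFactorial (p-1) = (p-1).factorial * Nat.choose (m*p-1) (p-1) :=
      Nat.descFactorial_eq_factorial_mul_choose _ _
    have h2 : ((m*p - 1).descFactorial (p-1) : ℤ) = FF p (m:ℤ) := by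
      rw [Nat.descFactorial_eq_prod_range, Nat.cast_prod]
      unfold FF
      apply Finset.prod_congr rfl
      intro i hi
      have hi' : i < p - 1 := Finset.mem_range.1 hi
      have hmp : p ≤ m * p := Nat.le_mul_of_pos_left p hm
      have : (((m*p - 1) - i : ℕ) : ℤ) = (m:ℤ) * p - (i+1) := by
        push_cast [Nat.sub_sub]
        omega
      rw [this]
    rw [← h2, h1]
    push_cast
    ring
  -- Step: G = 2 * (p-1)! * Sint
  have hG2 : G = 2 * ((p-1).factorial : ℤ) * Sint := by
    have hsplit : G = (∑ j ∈ range (n+1), AA n j * FF p ((n:ℤ)+1-j))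
        + ∑ i ∈ range (n+1), AA n (n+1+i) * FF p ((n:ℤ)+1-(n+1+i : ℕ)) := by
      rw [hG, show 2*n+2 = (n+1)+(n+1) by ring, Finset.sum_range_add]
    have hrefl : ∀ i ∈ range (n+1), AA n (n+1+i) * FF p ((n:ℤ)+1-(n+1+i : ℕ))
        = AA n (n-i) * FF p ((n:ℤ)+1-(n-i : ℕ)) := by
      intro i hi
      have hi' : i < n + 1 := Finset.mem_range.1 hi
      have hA : AA n (n+1+i) = AA n (n-i) := by
        rw [show n+1+i = 2*n+1-(n-i) by omega]
        exact AA_symm n (n-i) (by omega)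
      have hF : FF p ((n:ℤ)+1-(n+1+i : ℕ)) = FF p ((n:ℤ)+1-(n-i : ℕ)) := by
        have e1 : ((n:ℤ)+1-(n+1+i : ℕ)) = 1 - ((n:ℤ)+1-(n-i : ℕ)) := by
          push_cast
          omega
        rw [e1, FF_symm p hodd]
      rw [hA, hF]
    rw [Finset.sum_congr rfl hrefl] at hsplit
    have hrev : ∑ i ∈ range (n+1), AA n (n-i) * FF p ((n:ℤ)+1-(n-i : ℕ))
        = ∑ j ∈ range (n+1), AA n j * FF p ((n:ℤ)+1-j) := by
      exact Finset.sum_range_reflect (fun j => AA n j * FF p ((n:ℤ)+1-j)) (n+1)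
    rw [hrev] at hsplit
    have hval : ∀ j ∈ range (n+1), AA n j * FF p ((n:ℤ)+1-j)
        = ((p-1).factorial : ℤ) * (AA n j * (Nat.choose ((n+1-j)*p - 1) (p-1) : ℤ)) := by
      intro j hj
      have hj' : j < n + 1 := Finset.mem_range.1 hj
      have e1 : ((n:ℤ)+1-j) = ((n+1-j : ℕ) : ℤ) := by push_cast; omega
      rw [e1, hFFval (n+1-j) (by omega)]
      ring
    rw [Finset.sum_congr rfl hval, ← Finset.mul_sum] at hsplit
    rw [hsplit, hSint]
    ring
  -- Step: p^(2n+1) ∣ G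
  have hdvdG : (p:ℤ)^(2*n+1) ∣ G := by
    set Qp : Polynomial ℤ := ∏ i ∈ range (p-1), (X - C ((i:ℤ)+1)) with hQp
    have hdeg : Qp.natDegree < p := by
      calc Qp.natDegree ≤ ∑ i ∈ range (p-1), (X - C ((i:ℤ)+1)).natDegree :=
            Polynomial.natDegree_prod_le _ _
        _ ≤ ∑ i ∈ range (p-1), 1 := by
            apply Finset.sum_le_sum
            intro i _
            exact le_of_eq (Polynomial.natDegree_X_sub_C _)
        _ < p := by simp; omega
    have hFeval : ∀ m : ℤ, FF p m = ∑ k ∈ range p, Qp.coeff k * m^k * (p:ℤ)^k := by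
      intro m
      have h1 : FF p m = Qp.eval (m * p) := by
        rw [hQp, Polynomial.eval_prod]
        unfold FF
        apply Finset.prod_congr rfl
        intro i _
        simp
      rw [h1, Polynomial.eval_eq_sum_range' hdeg]
      apply Finset.sum_congr rfl
      intro k _
      rw [mul_pow]
      ring
    have hGsum : G = ∑ k ∈ range p, Qp.coeff k * (p:ℤ)^k *
        (∑ j ∈ range (2*n+2), AA n j * ((n:ℤ)+1-j)^k) := by
      rw [hG]
      have : ∀ j ∈ range (2*n+2), AA n j * FF p ((n:ℤ)+1-j)
          = ∑ k ∈ range p, Qp.coeff k * (p:ℤ)^k * (AA n j * ((n:ℤ)+1-j)^k) := by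
        intro j _
        rw [hFeval, Finset.mul_sum]
        apply Finset.sum_congr rfl
        intro k _
        ring
      rw [Finset.sum_congr rfl this, Finset.sum_comm]
      apply Finset.sum_congr rfl
      intro k _
      rw [Finset.mul_sum]
    -- moments vanish for k < 2n
    have hN : ∀ k : ℕ, k < 2*n → (∑ j ∈ range (2*n+2), AA n j * ((n:ℤ)+1-j)^k) = 0 := by
      intro k hk
      have hsplitAA : ∀ j ∈ range (2*n+2), AA n j * ((n:ℤ)+1-j)^k
          = (-1:ℤ)^j * (Nat.choose (2*n) j : ℤ) * (((n:ℤ)+1) - j)^k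
            - (-1:ℤ)^j * (if j = 0 then 0 else (Nat.choose (2*n) (j-1) : ℤ)) * (((n:ℤ)+1) - j)^k := by
        intro j _
        unfold AA
        ring
      rw [Finset.sum_congr rfl hsplitAA, Finset.sum_sub_distrib]
      have hS1 : ∑ j ∈ range (2*n+2), (-1:ℤ)^j * (Nat.choose (2*n) j : ℤ) * (((n:ℤ)+1) - j)^k = 0 := by
        rw [Finset.sum_range_succ, Nat.choose_eq_zero_of_lt (by omega : 2*n < 2*n+1)]
        simp only [Nat.cast_zero, mul_zero, zero_mul, add_zero, mul_zero]
        rw [show 2*n+1 = (2*n)+1 by rfl]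
        have := FD (2*n) k ((n:ℤ)+1) hk
        simpa using this
      have hS2 : ∑ j ∈ range (2*n+2), (-1:ℤ)^j * (if j = 0 then 0 else (Nat.choose (2*n) (j-1) : ℤ)) * (((n:ℤ)+1) - j)^k = 0 := by
        rw [Finset.sum_range_succ' (fun j => (-1:ℤ)^j * (if j = 0 then 0 else (Nat.choose (2*n) (j-1) : ℤ)) * (((n:ℤ)+1) - j)^k)]
        simp only [if_pos rfl, mul_zero, zero_mul, add_zero]
        have e : ∀ j ∈ range (2*n+1), (-1:ℤ)^(j+1) * (if j+1 = 0 then 0 else (Nat.choose (2*n) (j+1-1) : ℤ)) * (((n:ℤ)+1) - (j+1:ℕ))^k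
            = -((-1:ℤ)^j * (Nat.choose (2*n) j : ℤ) * (((n:ℤ)) - j)^k) := by
          intro j _
          rw [if_neg (Nat.succ_ne_zero j), Nat.add_sub_cancel]
          push_cast
          ring_nf
        rw [Finset.sum_congr rfl e, Finset.sum_neg_distrib]
        rw [show 2*n+1 = (2*n)+1 by rfl]
        have := FD (2*n) k ((n:ℤ)) hk
        simp only [this]
        simp
      rw [hS1, hS2]
      ring
    rw [hGsum]
    apply Finset.dvd_sum
    intro k hk
    have hk' : k < p := Finset.mem_range.1 hk
    rcases lt_trichotomy k (2*n) with hlt | heq | hgt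
    · rw [hN k hlt, mul_zero]
      exact dvd_zero _
    · subst heq
      have hc : (p:ℤ) ∣ Qp.coeff (2*n) := coeff_dvd p hp (2*n) (by omega) (by omega)
      obtain ⟨c, hc⟩ := hc
      rw [hc]
      refine Dvd.intro (c * (∑ j ∈ range (2*n+2), AA n j * ((n:ℤ)+1-j)^(2*n))) ?_
      rw [pow_succ]
      ring
    · have : (p:ℤ)^(2*n+1) ∣ (p:ℤ)^k := pow_dvd_pow _ (by omega)
      obtain ⟨c, hc⟩ := this
      rw [hc]
      refine Dvd.intro (Qp.coeff k * c * (∑ j ∈ range (2*n+2), AA n j * ((n:ℤ)+1-j)^k)) ?_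
      ring
  -- Step: p^(2n+1) ∣ Sint
  have hcop : IsCoprime ((p:ℤ)^(2*n+1)) (2 * ((p-1).factorial : ℤ)) := by
    apply IsCoprime.pow_left
    have h2 : IsCoprime ((p:ℤ)) 2 := by
      rw [Int.isCoprime_iff_gcd_eq_one]
      have : ¬ (p ∣ 2) := fun hd => by have := Nat.le_of_dvd (by norm_num) hd; omega
      have := (Nat.Prime.coprime_iff_not_dvd hp).2 this
      simpa [Int.gcd] using this
    have h3 : IsCoprime ((p:ℤ)) (((p-1).factorial : ℕ) : ℤ) := by
      rw [Int.isCoprime_iff_gcd_eq_one]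
      have hnd : ¬ (p ∣ (p-1).factorial) := by
        rw [Nat.Prime.dvd_factorial hp]
        omega
      have := (Nat.Prime.coprime_iff_not_dvd hp).2 hnd
      simpa [Int.gcd] using this
    exact IsCoprime.mul_right h2 h3
  have hdvdS : (p:ℤ)^(2*n+1) ∣ Sint := by
    have h5 : (p:ℤ)^(2*n+1) ∣ Sint * (2 * ((p-1).factorial : ℤ)) := by
      rw [show Sint * (2 * ((p-1).factorial : ℤ)) = 2 * ((p-1).factorial : ℤ) * Sint by ring, ← hG2]
      exact hdvdG
    exact hcop.dvd_of_dvd_mul_right h5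
  obtain ⟨k, hk⟩ := hdvdS
  refine ⟨k, ?_⟩
  -- convert the rational sum to Sint
  have hterm : ∀ j ∈ range (n+1), (-1 : ℚ)^j *
          ((Nat.choose (2*n) j : ℚ) - (if j = 0 then 0 else (Nat.choose (2*n) (j-1) : ℚ))) *
          (Nat.choose ((n+1-j)*p) p : ℚ) / ((n : ℚ) + 1 - j)
      = ((AA n j : ℤ) : ℚ) * ((Nat.choose ((n+1-j)*p - 1) (p-1) : ℕ) : ℚ) := by
    intro j hj
    have hj' : j < n + 1 := Finset.mem_range.1 hj
    set m : ℕ := n + 1 - j with hm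
    have hm1 : 1 ≤ m := by omega
    -- choose identity: C(mp, p) = m * C(mp-1, p-1)
    have hch : Nat.choose (m*p) p = m * Nat.choose (m*p - 1) (p-1) := by
      have h1 := Nat.add_one_mul_choose_eq (m*p - 1) (p-1)
      have hmp : 1 ≤ m * p := by
        have := Nat.le_mul_of_pos_left p hm1
        omega
      rw [show m*p - 1 + 1 = m*p by omega, show p - 1 + 1 = p by omega] at h1
      -- h1 : m*p * choose (m*p-1) (p-1) = choose (m*p) p * p
      have hpne : 0 < p := by omega
      apply Nat.eq_of_mul_eq_mul_right hpne
      rw [← h1]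
      ring
    have hmQ : ((n : ℚ) + 1 - j) = (m : ℚ) := by
      rw [hm, Nat.cast_sub (by omega : j ≤ n+1)]
      push_cast
      ring
    have hmne : (m : ℚ) ≠ 0 := by
      simp only [ne_eq, Nat.cast_eq_zero]; omega
    have hAAcast : ((AA n j : ℤ) : ℚ) = (-1 : ℚ)^j *
        ((Nat.choose (2*n) j : ℚ) - (if j = 0 then 0 else (Nat.choose (2*n) (j-1) : ℚ))) := by
      unfold AA
      split_ifs with h0 <;> push_cast <;> ring
    rw [hmQ, hch]
    have hcast2 : ((m * Nat.choose (m*p - 1) (p-1) : ℕ) : ℚ)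
        = (m:ℚ) * ((Nat.choose (m*p-1) (p-1) : ℕ) : ℚ) := by push_cast; ring
    rw [hcast2, hAAcast]
    field_simp
  rw [Finset.sum_congr rfl hterm]
  have : ∑ j ∈ range (n+1), ((AA n j : ℤ) : ℚ) * ((Nat.choose ((n+1-j)*p - 1) (p-1) : ℕ) : ℚ)
      = ((Sint : ℤ) : ℚ) := by
    rw [hSint]
    push_cast
    rfl
  rw [this, hk]
  push_cast
  ring
end

section
/- For every integer n ≥ 1, the least positive integer L such that L * C(2n+1, n+1-i) * (2i-1) / ((2n+1) * i) is an integer for all i = 1, ..., n+1 equals lcm(1, 2, ..., 2n) * (2n+1) / C(2n+1, n). -/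
open Nat Finset

private lemma pow_pred (a k : ℕ) (hk : 1 ≤ k) : a ^ k = a * a ^ (k-1) := by
  obtain ⟨k', rfl⟩ : ∃ k', k = k' + 1 := ⟨k-1, by omega⟩
  rw [pow_succ, Nat.add_sub_cancel, Nat.mul_comm]

/-- The lcm of a finset of nonzero naturals is nonzero. -/
private lemma lcm_icc_ne_zero (N : ℕ) : (Finset.Icc 1 N).lcm id ≠ 0 := by
  intro h
  rw [Finset.lcm_eq_zero_iff] at h
  obtain ⟨k, hk, hk0⟩ := h
  simp only [Finset.mem_coe, Finset.mem_Icc] at hk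
  simp only [id_eq] at hk0
  omega

/-- Upper bound on the `p`-adic valuation of `lcm(1..N)`. -/
private lemma lcm_icc_factorization_le {p : ℕ} (hp : p.Prime) (N : ℕ) :
    ((Finset.Icc 1 N).lcm id).factorization p ≤ Nat.log p N := by
  classical
  have key : ∀ s : Finset ℕ, (∀ k ∈ s, k ∈ Finset.Icc 1 N) →
      (s.lcm id).factorization p ≤ Nat.log p N := by
    intro s
    induction s using Finset.induction_on with
    | empty => intro _; simp
    | @insert a s _ ih =>
      intro hs
      have ha' : a ∈ Finset.Icc 1 N := hs a (Finset.mem_insert_self a s)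
      rw [Finset.mem_Icc] at ha'
      have hane : a ≠ 0 := by omega
      have hsub : ∀ k ∈ s, k ∈ Finset.Icc 1 N := fun k hk => hs k (Finset.mem_insert_of_mem hk)
      have hlne : s.lcm id ≠ 0 := by
        intro h
        rw [Finset.lcm_eq_zero_iff] at h
        obtain ⟨k, hk, hk0⟩ := h
        have := hsub k (by simpa using hk)
        rw [Finset.mem_Icc] at this
        simp only [id_eq] at hk0
        omega
      rw [Finset.lcm_insert, id_eq, lcm_eq_nat_lcm,
        Nat.factorization_lcm hane hlne]
      have hafact : a.factorization p ≤ Nat.log p N := by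
        have h1 : p ^ a.factorization p ∣ a := Nat.ordProj_dvd a p
        have h2 : p ^ a.factorization p ≤ N :=
          le_trans (Nat.le_of_dvd (by omega) h1) ha'.2
        exact (Nat.le_log_iff_pow_le hp.one_lt (by omega)).mpr h2
      have := ih hsub
      rw [Finsupp.sup_apply]
      exact sup_le hafact this
  exact key _ (fun k hk => hk)

/-- Kummer lower bound: a set of carry positions bounds the valuation of a binomial from below. -/
private lemma card_le_fact_choose {p : ℕ} (hp : p.Prime) {k M b : ℕ} (hkM : k ≤ M)
    (hb : Nat.log p M < b) (s : Finset ℕ) (hs : s ⊆ Finset.Ico 1 b)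
    (hc : ∀ t ∈ s, p ^ t ≤ k % p ^ t + (M - k) % p ^ t) :
    s.card ≤ (M.choose k).factorization p := by
  haveI := Fact.mk hp
  rw [Nat.factorization_def _ hp, padicValNat_choose hkM hb]
  apply Finset.card_le_card
  intro t ht
  exact Finset.mem_filter.mpr ⟨hs ht, hc t ht⟩

/-- If there are no carries, the prime doesn't divide the binomial coefficient. -/
private lemma not_dvd_choose_of {p : ℕ} (hp : p.Prime) {k M : ℕ} (hkM : k ≤ M)
    (hc : ∀ t, 1 ≤ t → k % p ^ t + (M - k) % p ^ t < p ^ t) :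
    ¬ p ∣ M.choose k := by
  haveI := Fact.mk hp
  have h0 : (M.choose k).factorization p = 0 := by
    rw [Nat.factorization_def _ hp, padicValNat_choose hkM (lt_add_one _)]
    rw [Finset.card_eq_zero, Finset.filter_eq_empty_iff]
    intro t ht
    rw [Finset.mem_Ico] at ht
    exact not_le.mpr (hc t ht.1)
  intro hdvd
  have := (Nat.Prime.dvd_iff_one_le_factorization hp (Nat.choose_pos hkM).ne').mp hdvd
  omega

/-- Classical bound: `v_p(j * C(M,j)) ≤ log_p M`. -/
private lemma fact_mul_choose_le {p : ℕ} (hp : p.Prime) {j M : ℕ} (hj : 1 ≤ j) (hjM : j ≤ M) :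
    (j * M.choose j).factorization p ≤ Nat.log p M := by
  haveI := Fact.mk hp
  have hjne : j ≠ 0 := by omega
  have hCne : M.choose j ≠ 0 := (Nat.choose_pos hjM).ne'
  set v := j.factorization p with hv
  have hpv : p ^ v ∣ j := Nat.ordProj_dvd j p
  have hvlog : v ≤ Nat.log p M := by
    have h1 : p ^ v ≤ M := le_trans (Nat.le_of_dvd (by omega) hpv) hjM
    exact (Nat.le_log_iff_pow_le hp.one_lt (by omega)).mpr h1
  have hC : (M.choose j).factorization p ≤ Nat.log p M - v := by
    rw [Nat.factorization_def _ hp, padicValNat_choose hjM (lt_add_one _)]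
    have hsub : (Finset.Ico 1 (Nat.log p M + 1)).filter
        (fun t => p ^ t ≤ j % p ^ t + (M - j) % p ^ t)
        ⊆ Finset.Ico (v + 1) (Nat.log p M + 1) := by
      intro t ht
      rw [Finset.mem_filter, Finset.mem_Ico] at ht
      obtain ⟨⟨ht1, ht2⟩, htc⟩ := ht
      rw [Finset.mem_Ico]
      refine ⟨?_, ht2⟩
      by_contra hcon
      have htv : t ≤ v := by omega
      have hz : j % p ^ t = 0 := Nat.mod_eq_zero_of_dvd (dvd_trans (pow_dvd_pow p htv) hpv)
      rw [hz, zero_add] at htc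
      exact absurd htc (not_le.mpr (Nat.mod_lt _ (pow_pos hp.pos t)))
    calc _ ≤ (Finset.Ico (v + 1) (Nat.log p M + 1)).card := Finset.card_le_card hsub
      _ = Nat.log p M - v := by rw [Nat.card_Ico]; omega
  rw [Nat.factorization_mul hjne hCne, Finsupp.add_apply]
  omega

/-- Main divisibility: `j * C(M, j) ∣ lcm(1..N)` for `1 ≤ j ≤ M ≤ N`. -/
private lemma mul_choose_dvd_lcm {N j M : ℕ} (hj : 1 ≤ j) (hjM : j ≤ M) (hMN : M ≤ N) :
    j * M.choose j ∣ (Finset.Icc 1 N).lcm id := by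
  have hLne : (Finset.Icc 1 N).lcm id ≠ 0 := lcm_icc_ne_zero N
  have hne : j * M.choose j ≠ 0 := by
    have := (Nat.choose_pos hjM).ne'
    positivity
  rw [← Nat.factorization_le_iff_dvd hne hLne]
  intro p
  by_cases hp : p.Prime
  · have h1 : (j * M.choose j).factorization p ≤ Nat.log p M := fact_mul_choose_le hp hj hjM
    have h2 : p ^ ((j * M.choose j).factorization p) ∣ (Finset.Icc 1 N).lcm id := by
      have hmem : p ^ ((j * M.choose j).factorization p) ∈ Finset.Icc 1 N := by
        rw [Finset.mem_Icc]
        constructor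
        · exact Nat.one_le_pow _ _ hp.pos
        · calc p ^ ((j * M.choose j).factorization p) ≤ p ^ Nat.log p M :=
                Nat.pow_le_pow_right hp.one_lt.le h1
            _ ≤ M := Nat.pow_log_le_self p (by omega)
            _ ≤ N := hMN
      simpa using Finset.dvd_lcm (f := id) hmem
    exact (hp.pow_dvd_iff_le_factorization hLne).mp h2
  · simp [Nat.factorization_eq_zero_of_not_prime _ hp]

/-- Core binomial identity. -/
private lemma key_id {n i : ℕ} (hi : 1 ≤ i) (hin : i ≤ n + 1) :
    (2*n+1).choose (n+1-i) * (n+i).choose i = (2*n+1).choose n * (n+1).choose i := by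
  have h1 : (2*n+1).choose (n+1-i) = (2*n+1).choose (n+i) := by
    have e1 : n + 1 - i = 2*n+1 - (n+i) := by omega
    rw [e1, Nat.choose_symm (by omega)]
  have h2 : (2*n+1).choose (n+i) * (n+i).choose i
      = (2*n+1).choose i * (2*n+1-i).choose (n+i-i) := Nat.choose_mul (by omega)
  have h3 : (2*n+1).choose (n+1) * (n+1).choose i
      = (2*n+1).choose i * (2*n+1-i).choose (n+1-i) := Nat.choose_mul hin
  have h4 : (2*n+1).choose (n+1) = (2*n+1).choose n := by
    rw [← Nat.choose_symm (show n+1 ≤ 2*n+1 by omega)]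
    congr 1
    omega
  have h5 : (2*n+1-i).choose (n+i-i) = (2*n+1-i).choose (n+1-i) := by
    have e1 : n + i - i = n := by omega
    have e2 : n + 1 - i = (2*n+1-i) - n := by omega
    rw [e1, e2, Nat.choose_symm (by omega)]
  rw [h1, h2, h5, ← h3, h4]

/-- Witness construction: for every prime `p` there is `i ∈ [1, n+1]` with
`p^(log p (2n)) ∣ i * C(n+i, i)` and `p ∤ (2i-1) * C(n+1, i)`. -/
private lemma witness {n p : ℕ} (hn : 1 ≤ n) (hp : p.Prime) :
    ∃ i, 1 ≤ i ∧ i ≤ n + 1 ∧ p ^ (Nat.log p (2*n)) ∣ i * (n+i).choose i ∧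
      ¬ p ∣ (2*i-1) * (n+1).choose i := by
  have hp1 : 1 < p := hp.one_lt
  set e := Nat.log p (2*n) with he
  by_cases he0 : e = 0
  · -- trivial valuation case
    by_cases hdvd : p ∣ 2*n+1
    · refine ⟨1, le_refl 1, by omega, by simp [he0], ?_⟩
      have hB : (2*1-1) * (n+1).choose 1 = n+1 := by
        rw [Nat.choose_one_right]; omega
      rw [hB]
      intro hcon
      have h1 : p ∣ 2*(n+1) - (2*n+1) := Nat.dvd_sub (Dvd.dvd.mul_left hcon 2) hdvd
      have h2 : 2*(n+1) - (2*n+1) = 1 := by omega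
      rw [h2] at h1
      have := Nat.le_of_dvd one_pos h1
      omega
    · refine ⟨n+1, by omega, le_refl _, by simp [he0], ?_⟩
      have hB : (2*(n+1)-1) * (n+1).choose (n+1) = 2*n+1 := by
        rw [Nat.choose_self]; omega
      rw [hB]
      exact hdvd
  · have he1 : 1 ≤ e := by omega
    have hpe2n : p ^ e ≤ 2*n := Nat.pow_log_le_self p (by omega)
    set m := n + 1 with hm
    by_cases hcase : p ^ e ≤ m
    · -- easy case : i = p^e * (m / p^e)
      set i := p ^ e * (m / p ^ e) with hi
      have hpow_pos : 0 < p ^ e := pow_pos hp.pos e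
      have hq1 : 1 ≤ m / p ^ e := (Nat.one_le_div_iff hpow_pos).mpr hcase
      have hile : i ≤ m := by
        rw [hi, mul_comm]
        exact Nat.div_mul_le_self m _
      have hige : p ^ e ≤ i := Nat.le_mul_of_pos_right _ hq1
      have hpei : p ^ e ∣ i := dvd_mul_right _ _
      have hdm := Nat.div_add_mod m (p ^ e)
      have hir : m - i = m % p ^ e := by omega
      have hrlt : m % p ^ e < p ^ e := Nat.mod_lt _ hpow_pos
      refine ⟨i, by omega, hile, Dvd.dvd.mul_right hpei _, ?_⟩
      have hpi : p ∣ i := dvd_trans (dvd_pow_self p he0) hpei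
      have h2i : ¬ p ∣ (2*i-1) := by
        intro hcon
        have h2 : p ∣ 2*i := Dvd.dvd.mul_left hpi 2
        have h3 : p ∣ 2*i - (2*i-1) := Nat.dvd_sub h2 hcon
        have h4 : 2*i - (2*i-1) = 1 := by omega
        rw [h4] at h3
        have := Nat.le_of_dvd one_pos h3
        omega
      have hC : ¬ p ∣ m.choose i := by
        apply not_dvd_choose_of hp hile
        intro t ht
        rw [hir]
        have hpt_pos : 0 < p ^ t := pow_pos hp.pos t
        rcases le_or_gt t e with hte | het
        · have h1 : i % p ^ t = 0 := Nat.mod_eq_zero_of_dvd (dvd_trans (pow_dvd_pow p hte) hpei)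
          rw [h1, zero_add]
          exact Nat.mod_lt _ hpt_pos
        · have h1 : m % p ^ e % p ^ t = m % p ^ e :=
            Nat.mod_eq_of_lt (lt_of_lt_of_le hrlt (Nat.pow_le_pow_right hp.one_lt.le het.le))
          rw [h1]
          have h2 : p ^ e ∣ i % p ^ t :=
            (Nat.dvd_mod_iff (pow_dvd_pow p het.le)).mpr hpei
          obtain ⟨c, hc⟩ := h2
          have h3 : i % p ^ t < p ^ t := Nat.mod_lt _ hpt_pos
          have h4 : p ^ t = p ^ e * p ^ (t - e) := by
            rw [← pow_add]; congr 1; omega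
          have h5 : c < p ^ (t - e) := by
            rw [hc, h4] at h3
            exact Nat.lt_of_mul_lt_mul_left h3
          have h6 : p ^ e * c + p ^ e ≤ p ^ e * p ^ (t - e) := by
            calc p ^ e * c + p ^ e = p ^ e * (c + 1) := by ring
              _ ≤ p ^ e * p ^ (t - e) := Nat.mul_le_mul_left _ (by omega)
          omega
      intro hcon
      rcases (Nat.Prime.dvd_mul hp).mp hcon with h | h
      · exact h2i h
      · exact hC h
    · -- hard case : m < p^e
      push_neg at hcase
      have hhard : p ^ e + 2 ≤ 2*m := by omega
      rcases eq_or_ne p 2 with hp2 | hpodd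
      · -- p = 2, i = 2^(e-1)
        subst hp2
        set i := 2 ^ (e-1) with hi
        have hpow : 2 ^ e = 2 * 2 ^ (e-1) := pow_pred 2 e he1
        have hipos : (1:ℕ) ≤ i := Nat.one_le_two_pow
        have him : i + 1 ≤ m := by omega
        refine ⟨i, hipos, by omega, ?_, ?_⟩
        · -- 2^e ∣ i * C(n+i, i)
          have hCne : (n+i).choose i ≠ 0 := (Nat.choose_pos (Nat.le_add_left _ _)).ne'
          have hine : i ≠ 0 := by omega
          rw [Nat.Prime.pow_dvd_iff_le_factorization hp (mul_ne_zero hine hCne)]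
          rw [Nat.factorization_mul hine hCne, Finsupp.add_apply]
          have hif : i.factorization 2 = e - 1 := by
            rw [hi, Nat.Prime.factorization_pow hp, Finsupp.single_eq_same]
          have hCf : 1 ≤ ((n+i).choose i).factorization 2 := by
            have hcard : ({e} : Finset ℕ).card = 1 := Finset.card_singleton e
            rw [← hcard]
            apply card_le_fact_choose hp (Nat.le_add_left i n) (b := e + 2)
            · -- log bound
              apply Nat.log_lt_of_lt_pow (by omega)
              have h2n : 2*n < 2 ^ (e+1) := Nat.lt_pow_succ_log_self hp.one_lt (2*n)
              have h3 : 2 ^ (e+1) < 2 ^ (e+2) := Nat.pow_lt_pow_right hp.one_lt (by omega)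
              omega
            · intro t ht
              rw [Finset.mem_singleton] at ht
              subst ht
              rw [Finset.mem_Ico]
              omega
            · intro t ht
              rw [Finset.mem_singleton] at ht
              subst ht
              rw [Nat.add_sub_cancel]
              have h1 : i % 2 ^ e = i := Nat.mod_eq_of_lt (by omega)
              have h2 : n % 2 ^ e = n := Nat.mod_eq_of_lt (by omega)
              rw [h1, h2]
              omega
          omega
        · -- odd part
          intro hcon
          rcases (Nat.Prime.dvd_mul hp).mp hcon with h | h
          · obtain ⟨c, hc⟩ := h
            omega
          · refine not_dvd_choose_of hp (by omega : i ≤ m) ?_ h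
            intro t ht
            have hpt_pos : 0 < (2:ℕ) ^ t := pow_pos (by omega) t
            rcases le_or_gt t (e-1) with hte | het
            · have h1 : i % 2 ^ t = 0 := Nat.mod_eq_zero_of_dvd (pow_dvd_pow 2 hte)
              rw [h1, zero_add]
              exact Nat.mod_lt _ hpt_pos
            · have hte' : e ≤ t := by omega
              have h2t : 2 ^ e ≤ 2 ^ t := Nat.pow_le_pow_right (by omega) hte'
              have h1 : i % 2 ^ t = i := Nat.mod_eq_of_lt (by omega)
              have h2 : (m - i) % 2 ^ t = m - i := Nat.mod_eq_of_lt (by omega)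
              rw [h1, h2]
              omega
      · -- p odd
        have hp3 : 3 ≤ p := by
          have := hp.two_le
          omega
        obtain ⟨podd, hpodd'⟩ := hp.odd_of_ne_two hpodd
        -- define j0 via findGreatest
        have hP0 : ¬ (2 * (m % p^0) + p^e = 2*m + p^0) := by
          rw [pow_zero, Nat.mod_one]
          omega
        have hPe : (2 * (m % p^e) + p^e = 2*m + p^e) := by
          rw [Nat.mod_eq_of_lt hcase]
        set Q : ℕ → Prop := fun j => ¬ (2 * (m % p^j) + p^e = 2*m + p^j) with hQdef
        haveI : DecidablePred Q := fun j => by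
          simp only [hQdef]; infer_instance
        set j0 := Nat.findGreatest Q e with hj0def
        have hQ0 : Q 0 := hP0
        have hj0P : ¬ (2 * (m % p^j0) + p^e = 2*m + p^j0) :=
          Nat.findGreatest_spec (P := Q) (Nat.zero_le e) hQ0
        have hj0le : j0 ≤ e := Nat.findGreatest_le e
        have hj0lt : j0 < e := by
          rcases lt_or_eq_of_le hj0le with h | h
          · exact h
          · exact absurd (h ▸ hj0P) (not_not_intro hPe)
        have hT : ∀ t, j0 < t → t ≤ e → 2 * (m % p^t) + p^e = 2*m + p^t := by
          intro t h1 h2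
          by_contra hc
          have h3 := Nat.findGreatest_is_greatest (P := Q)
            (show Nat.findGreatest Q e < t from hj0def ▸ h1) h2
          exact h3 hc
        obtain ⟨r, hrdef⟩ : ∃ r, m % p ^ j0 = r := ⟨_, rfl⟩
        obtain ⟨d, hddef⟩ : ∃ d, (m / p ^ j0) % p = d := ⟨_, rfl⟩
        have hdm := Nat.div_add_mod m (p ^ j0)
        rw [hrdef] at hdm
        have hpj0_pos : 0 < p ^ j0 := pow_pos hp.pos j0
        have hrlt : r < p ^ j0 := hrdef ▸ Nat.mod_lt _ hpj0_pos
        have hps : p ^ (j0+1) = p ^ j0 * p := pow_succ p j0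
        have hdlt : d < p := hddef ▸ Nat.mod_lt _ hp.pos
        have hR : m % p ^ (j0+1) = p ^ j0 * d + r := by
          have hq := Nat.div_add_mod (m / p ^ j0) p
          rw [hddef] at hq
          have hm_eq : m = (p ^ j0 * p) * (m / p ^ j0 / p) + (p ^ j0 * d + r) := by
            calc m = p ^ j0 * (m / p ^ j0) + r := by omega
              _ = p ^ j0 * (p * (m / p ^ j0 / p) + d) + r := by rw [hq]
              _ = (p ^ j0 * p) * (m / p ^ j0 / p) + (p ^ j0 * d + r) := by ring
          rw [hps, hm_eq, Nat.mul_add_mod]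
          apply Nat.mod_eq_of_lt
          calc p ^ j0 * d + r < p ^ j0 * d + p ^ j0 := by omega
            _ = p ^ j0 * (d + 1) := by ring
            _ ≤ p ^ j0 * p := Nat.mul_le_mul_left _ (by omega)
        have hT1 := hT (j0+1) (lt_add_one _) (by omega)
        rw [hR] at hT1
        have h2dge : p - 1 ≤ 2*d := by
          by_contra hcon
          push_neg at hcon
          have h1 : p ^ j0 * (2*d) ≤ p ^ j0 * (p-2) := Nat.mul_le_mul_left _ (by omega)
          have h2 : p ^ j0 * (p - 2) + p ^ j0 * 2 = p ^ j0 * p := by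
            rw [← Nat.mul_add]
            congr 1
            omega
          have h3 : p ^ j0 * (2*d) = 2 * (p ^ j0 * d) := by ring
          omega
        have h2dne : 2*d ≠ p - 1 := by
          intro hcon
          apply hj0P
          rw [hrdef]
          have h1 : p ^ j0 * (2*d) + p ^ j0 = p ^ j0 * p := by
            rw [hcon]
            calc p ^ j0 * (p-1) + p ^ j0 = p ^ j0 * ((p-1) + 1) := by ring
              _ = p ^ j0 * p := by congr 1; omega
          have h3 : p ^ j0 * (2*d) = 2 * (p ^ j0 * d) := by ring
          omega
        have h2dge' : p + 1 ≤ 2*d := by omega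
        have hkey : p ^ e + 1 + r ≤ 2*m := by
          have h1 : p ^ j0 * (p+1) ≤ p ^ j0 * (2*d) := Nat.mul_le_mul_left _ h2dge'
          have h2 : p ^ j0 * (p + 1) = p ^ j0 * p + p ^ j0 := by ring
          have h3 : p ^ j0 * (2*d) = 2 * (p ^ j0 * d) := by ring
          omega
        set i := m - r with hi
        have hipj0 : p ^ j0 ∣ i := ⟨m / p ^ j0, by omega⟩
        have hj0e1 : p ^ j0 ≤ p ^ (e-1) := Nat.pow_le_pow_right hp.pos (by omega)
        have hpe_split : p ^ e = p ^ (e-1) * p := by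
          rw [← pow_succ]
          congr 1
          omega
        have hi1 : 1 ≤ i := by
          have hE3 : 3 * p ^ (e-1) ≤ p ^ e := by
            calc 3 * p ^ (e-1) = p ^ (e-1) * 3 := by ring
              _ ≤ p ^ (e-1) * p := Nat.mul_le_mul_left _ hp3
              _ = p ^ e := hpe_split.symm
          have h2 : 0 < p ^ (e-1) := pow_pos hp.pos _
          omega
        have him : i ≤ m := Nat.sub_le _ _
        have hmodt : ∀ t, j0 < t → i % p ^ t = m % p ^ t - r ∧ r ≤ m % p ^ t := by
          intro t ht
          have hdvd : p ^ j0 ∣ p ^ t := pow_dvd_pow p ht.le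
          have h1 : m % p ^ t % p ^ j0 = r := (Nat.mod_mod_of_dvd m hdvd).trans hrdef
          have h2 : r ≤ m % p ^ t := h1 ▸ Nat.mod_le _ _
          have hpt_pos : 0 < p ^ t := pow_pos hp.pos t
          have h3 := Nat.div_add_mod m (p ^ t)
          have h4 : i = p ^ t * (m / p ^ t) + (m % p ^ t - r) := by omega
          constructor
          · rw [h4, Nat.mul_add_mod]
            exact Nat.mod_eq_of_lt (lt_of_le_of_lt (Nat.sub_le _ _) (Nat.mod_lt _ hpt_pos))
          · exact h2
        refine ⟨i, hi1, by omega, ?_, ?_⟩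
        · -- p^e ∣ i * C(n+i,i)
          have hCne : (n+i).choose i ≠ 0 := (Nat.choose_pos (Nat.le_add_left _ _)).ne'
          have hine : i ≠ 0 := by omega
          rw [Nat.Prime.pow_dvd_iff_le_factorization hp (mul_ne_zero hine hCne)]
          rw [Nat.factorization_mul hine hCne, Finsupp.add_apply]
          have hfi : j0 ≤ i.factorization p :=
            (hp.pow_dvd_iff_le_factorization hine).mp hipj0
          have hC : e - j0 ≤ ((n+i).choose i).factorization p := by
            have hcard : (Finset.Ico (j0+1) (e+1)).card = e - j0 := by
              rw [Nat.card_Ico]; omega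
            rw [← hcard]
            apply card_le_fact_choose hp (Nat.le_add_left i n) (b := e + 2)
            · apply Nat.log_lt_of_lt_pow (by omega)
              have h2n : 2*n < p ^ (e+1) := Nat.lt_pow_succ_log_self hp.one_lt (2*n)
              have h3 : p ^ (e+1) < p ^ (e+2) := Nat.pow_lt_pow_right hp.one_lt (by omega)
              omega
            · intro t ht
              rw [Finset.mem_Ico] at ht ⊢
              omega
            · intro t ht
              rw [Finset.mem_Ico] at ht
              obtain ⟨htl, htu⟩ := ht
              obtain ⟨hit, hrt⟩ := hmodt t (by omega)
              rw [Nat.add_sub_cancel]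
              have hTt := hT t (by omega) (by omega)
              have hpt_pos : 0 < p ^ t := pow_pos hp.pos t
              have hm1 : 1 ≤ m % p ^ t := by omega
              have hn' : n % p ^ t = m % p ^ t - 1 := by
                have h3 := Nat.div_add_mod m (p ^ t)
                have h4 : n = p ^ t * (m / p ^ t) + (m % p ^ t - 1) := by omega
                rw [h4, Nat.mul_add_mod]
                exact Nat.mod_eq_of_lt (by
                  have := Nat.mod_lt m hpt_pos
                  omega)
              rw [hit, hn']
              omega
          omega
        · -- not divisible part
          have hmi : m - i = r := by omega
          have hC : ¬ p ∣ m.choose i := by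
            apply not_dvd_choose_of hp him
            intro t ht1
            rw [hmi]
            have hpt_pos : 0 < p ^ t := pow_pos hp.pos t
            rcases le_or_gt t j0 with hle | hgt
            · have h1 : i % p ^ t = 0 :=
                Nat.mod_eq_zero_of_dvd (dvd_trans (pow_dvd_pow p hle) hipj0)
              rw [h1, zero_add]
              exact Nat.mod_lt _ hpt_pos
            · obtain ⟨hit, hrt⟩ := hmodt t hgt
              have hrpt : r % p ^ t = r :=
                Nat.mod_eq_of_lt (lt_of_lt_of_le hrlt (Nat.pow_le_pow_right hp.pos hgt.le))
              rw [hit, hrpt]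
              have := Nat.mod_lt m hpt_pos
              omega
          intro hcon
          rcases (Nat.Prime.dvd_mul hp).mp hcon with h | h
          · rcases Nat.eq_zero_or_pos j0 with hj00 | hj0pos
            · -- j0 = 0 : i = m, contradiction via hT 1
              have hr0 : r = 0 := by
                rw [← hrdef, hj00, pow_zero, Nat.mod_one]
              have him' : i = m := by omega
              have hT1' := hT 1 (by omega) he1
              rw [pow_one] at hT1'
              have h5 := Nat.div_add_mod m p
              have hmp1 : 1 ≤ m % p := by omega
              have h6 : p ∣ 2*m - 1 := by
                rw [him'] at h
                exact h
              have h8 : 2*m - 1 = p*(2*(m/p)) + (2*(m % p) - 1) := by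
                have hq2 : p*(2*(m/p)) = 2*(p*(m/p)) := by ring
                omega
              rw [h8] at h6
              have h7 : p ∣ 2*(m % p) - 1 := (Nat.dvd_add_right ⟨2*(m/p), rfl⟩).mp h6
              obtain ⟨c, hc⟩ := h7
              have hc2 : m % p < p := Nat.mod_lt _ hp.pos
              rcases Nat.lt_or_ge c 2 with hcl | hcg
              · interval_cases c <;> omega
              · have h2c : p*2 ≤ p*c := Nat.mul_le_mul_left _ hcg
                omega
            · have hpi : p ∣ i :=
                dvd_trans (dvd_pow_self p (by omega : j0 ≠ 0)) hipj0
              have h2 : p ∣ 2*i := Dvd.dvd.mul_left hpi 2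
              have h3 : p ∣ 2*i - (2*i-1) := Nat.dvd_sub h2 h
              have h4 : 2*i - (2*i-1) = 1 := by omega
              rw [h4] at h3
              have := Nat.le_of_dvd one_pos h3
              omega
          · exact hC h

theorem stmt19 (n : ℕ) (hn : 1 ≤ n) :
    IsLeast {L : ℕ | 0 < L ∧ ∀ i ∈ Finset.Icc 1 (n+1), ∃ z : ℤ,
        (L : ℚ) * (Nat.choose (2*n+1) (n+1-i) : ℚ) * (2*(i : ℚ) - 1) / ((2*(n : ℚ)+1) * i) = (z : ℚ)}
      ((Finset.Icc 1 (2*n)).lcm id * (2*n+1) / Nat.choose (2*n+1) n) := by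
  set Lc := (Finset.Icc 1 (2*n)).lcm id with hLcdef
  have hLcne : Lc ≠ 0 := lcm_icc_ne_zero _
  have hLcpos : 0 < Lc := Nat.pos_of_ne_zero hLcne
  have hCdvd : (2*n).choose n ∣ Lc := by
    have h1 : n * (2*n).choose n ∣ Lc :=
      mul_choose_dvd_lcm hn (by omega) (le_refl _)
    exact dvd_trans (dvd_mul_left _ n) h1
  have hsucc : (2*n+1) * (2*n).choose n = (2*n+1).choose (n+1) * (n+1) := by
    have := Nat.add_one_mul_choose_eq (2*n) n
    simpa [Nat.succ_eq_add_one] using this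
  have hsymm : (2*n+1).choose (n+1) = (2*n+1).choose n := by
    rw [← Nat.choose_symm (show n+1 ≤ 2*n+1 by omega)]
    congr 1
    omega
  have hDdvd : (2*n+1).choose n ∣ Lc * (2*n+1) := by
    have h1 : (2*n+1).choose n ∣ (2*n+1).choose (n+1) * (n+1) := by
      rw [hsymm]
      exact dvd_mul_right _ _
    have h2 : (2*n+1).choose (n+1) * (n+1) ∣ Lc * (2*n+1) := by
      rw [← hsucc, mul_comm Lc (2*n+1)]
      exact mul_dvd_mul_left _ hCdvd
    exact h1.trans h2
  set D := Lc * (2*n+1) / (2*n+1).choose n with hDdef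
  have hDmul : D * (2*n+1).choose n = Lc * (2*n+1) := Nat.div_mul_cancel hDdvd
  have hDpos : 0 < D := Nat.div_pos (Nat.le_of_dvd (by positivity) hDdvd)
    (Nat.choose_pos (by omega))
  have hAdvd : ∀ i, 1 ≤ i → i ≤ n+1 →
      (i * (n+i).choose i) ∣ Lc * ((2*i-1) * (n+1).choose i) := by
    intro i h1 h2
    rcases Nat.lt_or_ge i (n+1) with hlt | hge
    · have h3 : i * (n+i).choose i ∣ Lc :=
        mul_choose_dvd_lcm h1 (Nat.le_add_left _ _) (by omega)
      exact h3.mul_right _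
    · have hie : i = n+1 := by omega
      subst hie
      have e1 : n + (n+1) = 2*n+1 := by omega
      have e2 : 2*(n+1) - 1 = 2*n+1 := by omega
      rw [e1, e2, Nat.choose_self, mul_one]
      have h3 : (n+1) * (2*n+1).choose (n+1) = (2*n+1) * (2*n).choose n := by
        rw [mul_comm (n+1) _, ← hsucc]
      rw [h3, mul_comm Lc (2*n+1)]
      exact mul_dvd_mul_left _ hCdvd
  have hDeq : ∀ i, 1 ≤ i → i ≤ n+1 → ∀ q,
      Lc * ((2*i-1) * (n+1).choose i) = (i * (n+i).choose i) * q →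
      D * ((2*n+1).choose (n+1-i)) * (2*i-1) = q * ((2*n+1) * i) := by
    intro i h1 h2 q hq
    have hkey := key_id h1 h2
    have hpos : 0 < (i * (n+i).choose i) * (2*n+1).choose n := by
      have hc1 : 0 < (n+i).choose i := Nat.choose_pos (Nat.le_add_left _ _)
      have hc2 : 0 < (2*n+1).choose n := Nat.choose_pos (by omega)
      positivity
    apply Nat.eq_of_mul_eq_mul_right hpos
    calc D * ((2*n+1).choose (n+1-i)) * (2*i-1) * ((i * (n+i).choose i) * (2*n+1).choose n)
        = (D * (2*n+1).choose n) * (((2*n+1).choose (n+1-i) * (n+i).choose i) * i) * (2*i-1) := by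
          ring
      _ = (Lc * (2*n+1)) * (((2*n+1).choose n * (n+1).choose i) * i) * (2*i-1) := by
          rw [hDmul, hkey]
      _ = (Lc * ((2*i-1) * (n+1).choose i)) * ((2*n+1) * i) * (2*n+1).choose n := by ring
      _ = ((i * (n+i).choose i) * q) * ((2*n+1) * i) * (2*n+1).choose n := by rw [hq]
      _ = q * ((2*n+1) * i) * ((i * (n+i).choose i) * (2*n+1).choose n) := by ring
  constructor
  · refine ⟨hDpos, ?_⟩
    intro i hi
    rw [Finset.mem_Icc] at hi
    obtain ⟨h1, h2⟩ := hi
    obtain ⟨q, hq⟩ := hAdvd i h1 h2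
    refine ⟨(q : ℤ), ?_⟩
    have hEq := hDeq i h1 h2 q hq
    have hi0 : (i:ℚ) ≠ 0 := Nat.cast_ne_zero.mpr (by omega)
    have hn0 : (2*(n:ℚ)+1) ≠ 0 := by positivity
    rw [div_eq_iff (mul_ne_zero hn0 hi0)]
    have hcast := congrArg (fun x : ℕ => (x : ℚ)) hEq
    push_cast [Nat.cast_sub (show (1:ℕ) ≤ 2*i by omega)] at hcast
    push_cast
    linear_combination hcast
  · rintro L ⟨hLpos, hLmem⟩
    have hLne : L ≠ 0 := by omega
    apply Nat.le_of_dvd hLpos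
    rw [← Nat.factorization_le_iff_dvd (by omega) hLne]
    intro p
    by_cases hp : p.Prime
    swap
    · simp [Nat.factorization_eq_zero_of_not_prime _ hp]
    obtain ⟨i, h1, h2, h3, h4⟩ := witness hn hp
    obtain ⟨q, hq⟩ := hAdvd i h1 h2
    have hBne : (2*i-1) * (n+1).choose i ≠ 0 := by
      have := (Nat.choose_pos h2).ne'
      have h2i : 2*i-1 ≠ 0 := by omega
      positivity
    have hqne : q ≠ 0 := by
      intro h0
      rw [h0, mul_zero] at hq
      exact (mul_ne_zero hLcne hBne) hq
    have hAne : i * (n+i).choose i ≠ 0 := by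
      have := (Nat.choose_pos (Nat.le_add_left i n)).ne'
      have hi' : i ≠ 0 := by omega
      positivity
    have hpq : ¬ p ∣ q := by
      intro hpdvd
      have hA : Nat.log p (2*n) ≤ (i * (n+i).choose i).factorization p :=
        (hp.pow_dvd_iff_le_factorization hAne).mp h3
      have hq1 : 1 ≤ q.factorization p :=
        (Nat.Prime.dvd_iff_one_le_factorization hp hqne).mp hpdvd
      have hLclog : Lc.factorization p ≤ Nat.log p (2*n) :=
        lcm_icc_factorization_le hp (2*n)
      have hB0 : ((2*i-1) * (n+1).choose i).factorization p = 0 :=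
        Nat.factorization_eq_zero_of_not_dvd h4
      have hfe := congrArg (fun x : ℕ => x.factorization p) hq
      simp only [Nat.factorization_mul hLcne hBne,
        Nat.factorization_mul hAne hqne, Finsupp.add_apply] at hfe
      omega
    obtain ⟨z, hz⟩ := hLmem i (Finset.mem_Icc.mpr ⟨h1, h2⟩)
    have hEq := hDeq i h1 h2 q hq
    have hi0 : (i:ℚ) ≠ 0 := Nat.cast_ne_zero.mpr (by omega)
    have hn0 : (2*(n:ℚ)+1) ≠ 0 := by positivity
    have hden : ((2*(n:ℚ)+1) * (i:ℚ)) ≠ 0 := mul_ne_zero hn0 hi0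
    have hq' : (D:ℚ) * ((2*n+1).choose (n+1-i) : ℚ) * (2*(i:ℚ)-1)
        = (q:ℚ) * ((2*(n:ℚ)+1) * (i:ℚ)) := by
      have hcast := congrArg (fun x : ℕ => (x : ℚ)) hEq
      push_cast [Nat.cast_sub (show (1:ℕ) ≤ 2*i by omega)] at hcast
      linear_combination hcast
    have hz' : (L:ℚ) * ((2*n+1).choose (n+1-i) : ℚ) * (2*(i:ℚ)-1)
        = (z:ℚ) * ((2*(n:ℚ)+1) * (i:ℚ)) := by
      rw [div_eq_iff hden] at hz
      exact hz
    have hzq : (L : ℚ) * (q : ℚ) = (z : ℚ) * (D : ℚ) := by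
      apply mul_right_cancel₀ hden
      calc (L:ℚ) * (q:ℚ) * ((2*(n:ℚ)+1) * (i:ℚ))
          = (L:ℚ) * ((q:ℚ) * ((2*(n:ℚ)+1) * (i:ℚ))) := by ring
        _ = (L:ℚ) * ((D:ℚ) * ((2*n+1).choose (n+1-i) : ℚ) * (2*(i:ℚ)-1)) := by rw [hq']
        _ = (D:ℚ) * ((L:ℚ) * ((2*n+1).choose (n+1-i) : ℚ) * (2*(i:ℚ)-1)) := by ring
        _ = (D:ℚ) * ((z:ℚ) * ((2*(n:ℚ)+1) * (i:ℚ))) := by rw [hz']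
        _ = (z:ℚ) * (D:ℚ) * ((2*(n:ℚ)+1) * (i:ℚ)) := by ring
    have hint : ((L * q : ℕ) : ℤ) = z * (D : ℤ) := by
      have : ((L * q : ℕ) : ℚ) = ((z * (D:ℤ) : ℤ) : ℚ) := by
        push_cast
        exact hzq
      exact_mod_cast this
    have hdvdN : D ∣ L * q := by
      have h5 : (D : ℤ) ∣ ((L * q : ℕ) : ℤ) := ⟨z, by rw [hint]; ring⟩
      exact_mod_cast h5
    have h5 : D.factorization p ≤ (L*q).factorization p :=
      (Nat.factorization_le_iff_dvd (by omega) (mul_ne_zero hLne hqne)).mpr hdvdN p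
    rw [Nat.factorization_mul hLne hqne, Finsupp.add_apply] at h5
    have hq0 : q.factorization p = 0 := Nat.factorization_eq_zero_of_not_dvd hpq
    omega
end
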